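/- arXiv:1102.1310 — 5 statements merged into one kernel-verified Lean document; each statement's English description precedes it below -/
import Mathlib

section
/- Let r, s ≥ 0 and let f_1, …, f_{r+s} : [0,1] → ℝ be integrable functions. Then I(f_1,…,f_r) · I(f_{r+1},…,f_{r+s}) = ∑_S I(g_1^S,…,g_{r+s}^S), where the sum is over all subsets S ⊆ {1,…,r+s} of cardinality r, and (g_1^S,…,g_{r+s}^S) is the interleaving that places f_1,…,f_r in their given order at the positions belonging to S and f_{r+1},…,f_{r+s} in their given order at the remaining positions (the shuffle product formula for iterated integrals). -/
open MeasureTheory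

/-- The closed simplex `0 ≤ t 0 ≤ t 1 ≤ ⋯ ≤ t (n-1) ≤ 1` in `Fin n → ℝ`. -/
def unitSimplex (n : ℕ) : Set (Fin n → ℝ) :=
  {t | (∀ i j : Fin n, i ≤ j → t i ≤ t j) ∧ ∀ i, t i ∈ Set.Icc (0 : ℝ) 1}

namespace ShuffleAux

open Finset

variable {r s : ℕ}

theorem measurableSet_unitSimplex {n : ℕ} : MeasurableSet (unitSimplex n) := by
  have : unitSimplex n = (⋂ (i : Fin n) (j : Fin n) (_ : i ≤ j), {t : Fin n → ℝ | t i ≤ t j}) ∩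
      ⋂ i : Fin n, {t : Fin n → ℝ | t i ∈ Set.Icc (0 : ℝ) 1} := by
    ext t
    simp only [unitSimplex, Set.mem_setOf_eq, Set.mem_inter_iff, Set.mem_iInter]
  rw [this]
  exact MeasurableSet.inter
    (MeasurableSet.iInter fun i => MeasurableSet.iInter fun j => MeasurableSet.iInter fun _ =>
      measurableSet_le (measurable_pi_apply i) (measurable_pi_apply j))
    (MeasurableSet.iInter fun i => (measurable_pi_apply i) measurableSet_Icc)

theorem hyperplane_null_aux {ι : Type*} [Fintype ι] (p : ι → Prop) [DecidablePred p]
    (i0 : {k // p k}) (j0 : {k // ¬ p k}) :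
    (volume : Measure (ι → ℝ)) {x | x i0.1 = x j0.1} = 0 := by
  have hmp : MeasurePreserving
      (⇑(MeasurableEquiv.piEquivPiSubtypeProd (fun _ : ι => ℝ) p)) volume volume :=
    volume_preserving_piEquivPiSubtypeProd (fun _ : ι => ℝ) p
  have hsym : MeasurePreserving
      (⇑(MeasurableEquiv.piEquivPiSubtypeProd (fun _ : ι => ℝ) p).symm) volume volume :=
    MeasurePreserving.symm _ hmp
  have hmeas : MeasurableSet {x : ι → ℝ | x i0.1 = x j0.1} :=
    measurableSet_eq_fun (measurable_pi_apply _) (measurable_pi_apply _)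
  rw [← hsym.measure_preimage hmeas.nullMeasurableSet]
  have hpre : (⇑(MeasurableEquiv.piEquivPiSubtypeProd (fun _ : ι => ℝ) p).symm) ⁻¹'
        {x : ι → ℝ | x i0.1 = x j0.1}
      = {q : ({k // p k} → ℝ) × ({k // ¬ p k} → ℝ) | q.1 i0 = q.2 j0} := by
    ext q
    simp only [Set.mem_preimage, Set.mem_setOf_eq]
    have h1 : (MeasurableEquiv.piEquivPiSubtypeProd (fun _ : ι => ℝ) p).symm q i0.1
        = q.1 i0 := by
      show (Equiv.piEquivPiSubtypeProd p (fun _ : ι => ℝ)).symm q i0.1 = _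
      rw [Equiv.piEquivPiSubtypeProd_symm_apply, dif_pos i0.2]
    have h2 : (MeasurableEquiv.piEquivPiSubtypeProd (fun _ : ι => ℝ) p).symm q j0.1
        = q.2 j0 := by
      show (Equiv.piEquivPiSubtypeProd p (fun _ : ι => ℝ)).symm q j0.1 = _
      rw [Equiv.piEquivPiSubtypeProd_symm_apply, dif_neg j0.2]
    rw [h1, h2]
  rw [hpre, Measure.volume_eq_prod, Measure.prod_apply]
  · have hz : ∀ a : {k // p k} → ℝ,
        (volume : Measure ({k // ¬ p k} → ℝ))
          (Prod.mk a ⁻¹' {q : ({k // p k} → ℝ) × ({k // ¬ p k} → ℝ)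
            | q.1 i0 = q.2 j0}) = 0 := by
      intro a
      have : (Prod.mk a ⁻¹' {q : ({k // p k} → ℝ) × ({k // ¬ p k} → ℝ)
          | q.1 i0 = q.2 j0})
          = {b : {k // ¬ p k} → ℝ | b j0 = a i0} := by
        ext b
        simp only [Set.mem_preimage, Set.mem_setOf_eq]
        exact eq_comm
      rw [this, volume_pi]
      exact Measure.pi_hyperplane _ _ _
    simp only [hz]
    simp
  · exact measurableSet_eq_fun (measurable_fst.eval) (measurable_snd.eval)

theorem hyperplane_null {ι : Type*} [Fintype ι] {i j : ι} (hij : i ≠ j) :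
    (volume : Measure (ι → ℝ)) {x | x i = x j} = 0 := by
  classical
  exact hyperplane_null_aux (fun k => k = i) ⟨i, rfl⟩ ⟨j, fun h => hij h.symm⟩

theorem measurable_elim (x : Fin r ⊕ Fin s) :
    Measurable fun p : (Fin r → ℝ) × (Fin s → ℝ) => Sum.elim p.1 p.2 x := by
  cases x with
  | inl a => exact (measurable_pi_apply a).comp measurable_fst
  | inr b => exact (measurable_pi_apply b).comp measurable_snd

theorem ae_injective (r s : ℕ) :
    ∀ᵐ p : (Fin r → ℝ) × (Fin s → ℝ), Function.Injective (Sum.elim p.1 p.2) := by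
  have key : ∀ x y : Fin r ⊕ Fin s, x ≠ y →
      ∀ᵐ p : (Fin r → ℝ) × (Fin s → ℝ), Sum.elim p.1 p.2 x ≠ Sum.elim p.1 p.2 y := by
    intro x y hxy
    have hnull : (volume : Measure ((Fin r → ℝ) × (Fin s → ℝ)))
        {p | Sum.elim p.1 p.2 x = Sum.elim p.1 p.2 y} = 0 := by
      cases x with
      | inl a =>
        cases y with
        | inl a' =>
          have haa : a ≠ a' := fun h => hxy (by rw [h])
          have : {p : (Fin r → ℝ) × (Fin s → ℝ) | Sum.elim p.1 p.2 (.inl a)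
              = Sum.elim p.1 p.2 (.inl a')} = {u : Fin r → ℝ | u a = u a'} ×ˢ Set.univ := by
            ext ⟨u, v⟩; simp [Set.mem_prod]
          rw [this, Measure.volume_eq_prod, Measure.prod_prod, hyperplane_null haa, zero_mul]
        | inr b =>
          rw [Measure.volume_eq_prod, Measure.prod_apply]
          · have hz : ∀ u : Fin r → ℝ, (volume : Measure (Fin s → ℝ))
                (Prod.mk u ⁻¹' {p : (Fin r → ℝ) × (Fin s → ℝ) | Sum.elim p.1 p.2 (.inl a)
                  = Sum.elim p.1 p.2 (.inr b)}) = 0 := by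
              intro u
              have : (Prod.mk u ⁻¹' {p : (Fin r → ℝ) × (Fin s → ℝ) | Sum.elim p.1 p.2 (.inl a)
                  = Sum.elim p.1 p.2 (.inr b)}) = {v : Fin s → ℝ | v b = u a} := by
                ext v; simp only [Set.mem_preimage, Set.mem_setOf_eq, Sum.elim_inl, Sum.elim_inr]
                exact eq_comm
              rw [this, volume_pi]
              exact Measure.pi_hyperplane _ _ _
            simp only [hz]
            simp
          · exact measurableSet_eq_fun (measurable_elim _) (measurable_elim _)
      | inr b =>
        cases y with
        | inl a =>
          rw [Measure.volume_eq_prod, Measure.prod_apply]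
          · have hz : ∀ u : Fin r → ℝ, (volume : Measure (Fin s → ℝ))
                (Prod.mk u ⁻¹' {p : (Fin r → ℝ) × (Fin s → ℝ) | Sum.elim p.1 p.2 (.inr b)
                  = Sum.elim p.1 p.2 (.inl a)}) = 0 := by
              intro u
              have : (Prod.mk u ⁻¹' {p : (Fin r → ℝ) × (Fin s → ℝ) | Sum.elim p.1 p.2 (.inr b)
                  = Sum.elim p.1 p.2 (.inl a)}) = {v : Fin s → ℝ | v b = u a} := by
                ext v; simp only [Set.mem_preimage, Set.mem_setOf_eq, Sum.elim_inl, Sum.elim_inr]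
              rw [this, volume_pi]
              exact Measure.pi_hyperplane _ _ _
            simp only [hz]
            simp
          · exact measurableSet_eq_fun (measurable_elim _) (measurable_elim _)
        | inr b' =>
          have hbb : b ≠ b' := fun h => hxy (by rw [h])
          have : {p : (Fin r → ℝ) × (Fin s → ℝ) | Sum.elim p.1 p.2 (.inr b)
              = Sum.elim p.1 p.2 (.inr b')} = Set.univ ×ˢ {v : Fin s → ℝ | v b = v b'} := by
            ext ⟨u, v⟩; simp [Set.mem_prod]
          rw [this, Measure.volume_eq_prod, Measure.prod_prod, hyperplane_null hbb, mul_zero]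
    exact (ae_iff).2 (by simpa using hnull)
  have hall : ∀ᵐ p : (Fin r → ℝ) × (Fin s → ℝ), ∀ x y : Fin r ⊕ Fin s,
      x ≠ y → Sum.elim p.1 p.2 x ≠ Sum.elim p.1 p.2 y := by
    rw [ae_all_iff]
    intro x
    rw [ae_all_iff]
    intro y
    by_cases hxy : x = y
    · exact Filter.Eventually.of_forall fun p h => absurd hxy h
    · exact (key x y hxy).mono fun p h _ => h
  refine hall.mono fun p hp => ?_
  intro x y hxy
  by_contra hne
  exact hp x y hne hxy

theorem card_filter_lt_of_mem {T : Finset ℕ} {i : ℕ} (hi : i ∈ T) :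
    (T.filter (· < i)).card < T.card := by
  refine Finset.card_lt_card ?_
  rw [Finset.ssubset_iff_of_subset (Finset.filter_subset _ _)]
  exact ⟨i, hi, by simp⟩

theorem filter_lt_mono {T : Finset ℕ} {i j : ℕ} (hi : i ∈ T) (hij : i < j) :
    (T.filter (· < i)).card < (T.filter (· < j)).card := by
  refine Finset.card_lt_card ?_
  have hsub : T.filter (· < i) ⊆ T.filter (· < j) := by
    intro x hx
    simp only [Finset.mem_filter] at hx ⊢
    exact ⟨hx.1, lt_trans hx.2 hij⟩
  rw [Finset.ssubset_iff_of_subset hsub]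
  exact ⟨i, by simp [hi, hij], by simp⟩

theorem card_compl {S : Finset ℕ} (h1 : S ⊆ Finset.range (r + s)) (h2 : S.card = r) :
    ((Finset.range (r + s)) \ S).card = s := by
  rw [Finset.card_sdiff_of_subset h1, Finset.card_range, h2]
  omega

theorem cardL {S : Finset ℕ} (h2 : S.card = r) {i : ℕ} (hi : i ∈ S) :
    (S.filter (· < i)).card < r := h2 ▸ card_filter_lt_of_mem hi

theorem cardR {S : Finset ℕ} (h1 : S ⊆ Finset.range (r + s)) (h2 : S.card = r) {i : ℕ}
    (hin : i < r + s) (hi : i ∉ S) :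
    (((Finset.range (r + s)) \ S).filter (· < i)).card < s := by
  have := card_filter_lt_of_mem (T := (Finset.range (r + s)) \ S)
    (Finset.mem_sdiff.2 ⟨Finset.mem_range.2 hin, hi⟩)
  rwa [card_compl h1 h2] at this

/-- total version of the interleaving index map, with junk value -/
def sig' (r s : ℕ) (S : Finset ℕ) (i : Fin (r + s)) : Fin r ⊕ Fin s :=
  if h : (i : ℕ) ∈ S ∧ (S.filter (· < (i : ℕ))).card < r then .inl ⟨_, h.2⟩
  else if h' : (((Finset.range (r + s)) \ S).filter (· < (i : ℕ))).card < s then .inr ⟨_, h'⟩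
  else finSumFinEquiv.symm i

theorem sig'_eq_inl {S : Finset ℕ} (h2 : S.card = r) {i : Fin (r + s)} (hi : (i : ℕ) ∈ S) :
    sig' r s S i = .inl ⟨_, cardL h2 hi⟩ := by
  rw [sig', dif_pos ⟨hi, cardL h2 hi⟩]

theorem sig'_eq_inr {S : Finset ℕ} (h1 : S ⊆ Finset.range (r + s)) (h2 : S.card = r)
    {i : Fin (r + s)} (hi : (i : ℕ) ∉ S) :
    sig' r s S i = .inr ⟨_, cardR h1 h2 i.isLt hi⟩ := by
  rw [sig', dif_neg (by simp [hi]), dif_pos (cardR h1 h2 i.isLt hi)]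

theorem sig'_mem_inl {S : Finset ℕ} (h1 : S ⊆ Finset.range (r + s)) (h2 : S.card = r)
    {i : Fin (r + s)} {a : Fin r} (h : sig' r s S i = .inl a) :
    (i : ℕ) ∈ S ∧ (a : ℕ) = (S.filter (· < (i : ℕ))).card := by
  by_cases hi : (i : ℕ) ∈ S
  · rw [sig'_eq_inl h2 hi] at h
    exact ⟨hi, by rw [← Sum.inl_injective h]⟩
  · rw [sig'_eq_inr h1 h2 hi] at h
    exact absurd h (by simp)

theorem sig'_mem_inr {S : Finset ℕ} (h1 : S ⊆ Finset.range (r + s)) (h2 : S.card = r)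
    {i : Fin (r + s)} {b : Fin s} (h : sig' r s S i = .inr b) :
    (i : ℕ) ∉ S ∧ (b : ℕ) = (((Finset.range (r + s)) \ S).filter (· < (i : ℕ))).card := by
  by_cases hi : (i : ℕ) ∈ S
  · rw [sig'_eq_inl h2 hi] at h
    exact absurd h (by simp)
  · rw [sig'_eq_inr h1 h2 hi] at h
    exact ⟨hi, by rw [← Sum.inr_injective h]⟩

theorem sig'_inj {S : Finset ℕ} (h1 : S ⊆ Finset.range (r + s)) (h2 : S.card = r) :
    Function.Injective (sig' r s S) := by
  have key : ∀ i j : Fin (r + s), i < j → sig' r s S i ≠ sig' r s S j := by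
    intro i j hij
    by_cases hi : (i : ℕ) ∈ S <;> by_cases hj : (j : ℕ) ∈ S
    · rw [sig'_eq_inl h2 hi, sig'_eq_inl h2 hj]
      simp only [ne_eq, Sum.inl.injEq, Fin.mk.injEq]
      exact Nat.ne_of_lt (filter_lt_mono hi hij)
    · rw [sig'_eq_inl h2 hi, sig'_eq_inr h1 h2 hj]; simp
    · rw [sig'_eq_inr h1 h2 hi, sig'_eq_inl h2 hj]; simp
    · rw [sig'_eq_inr h1 h2 hi, sig'_eq_inr h1 h2 hj]
      simp only [ne_eq, Sum.inr.injEq, Fin.mk.injEq]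
      exact Nat.ne_of_lt (filter_lt_mono (Finset.mem_sdiff.2 ⟨Finset.mem_range.2 i.isLt, hi⟩) hij)
  intro i j hij
  rcases lt_trichotomy i j with h | h | h
  · exact absurd hij (key i j h)
  · exact h
  · exact absurd hij.symm (key j i h)

theorem sig'_bij {S : Finset ℕ} (h1 : S ⊆ Finset.range (r + s)) (h2 : S.card = r) :
    Function.Bijective (sig' r s S) :=
  (Fintype.bijective_iff_injective_and_card _).2 ⟨sig'_inj h1 h2, by simp⟩

/-- if the ranks compare then the positions compare -/
theorem lt_of_sig'_inl {S : Finset ℕ} (h1 : S ⊆ Finset.range (r + s)) (h2 : S.card = r)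
    {i j : Fin (r + s)} {a a' : Fin r} (hi : sig' r s S i = .inl a) (hj : sig' r s S j = .inl a')
    (h : a < a') : i < j := by
  rcases lt_trichotomy i j with hh | hh | hh
  · exact hh
  · subst hh; rw [hi] at hj; simp at hj; subst hj; exact absurd h (lt_irrefl _)
  · obtain ⟨hjS, hja⟩ := sig'_mem_inl h1 h2 hj
    obtain ⟨hiS, hia⟩ := sig'_mem_inl h1 h2 hi
    have := filter_lt_mono hjS hh
    have hlt : (a' : ℕ) < (a : ℕ) := by omega
    exact absurd h (by omega)

theorem lt_of_sig'_inr {S : Finset ℕ} (h1 : S ⊆ Finset.range (r + s)) (h2 : S.card = r)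
    {i j : Fin (r + s)} {b b' : Fin s} (hi : sig' r s S i = .inr b) (hj : sig' r s S j = .inr b')
    (h : b < b') : i < j := by
  rcases lt_trichotomy i j with hh | hh | hh
  · exact hh
  · subst hh; rw [hi] at hj; simp at hj; subst hj; exact absurd h (lt_irrefl _)
  · obtain ⟨hjS, hjb⟩ := sig'_mem_inr h1 h2 hj
    obtain ⟨hiS, hib⟩ := sig'_mem_inr h1 h2 hi
    have := filter_lt_mono (Finset.mem_sdiff.2 ⟨Finset.mem_range.2 j.isLt, hjS⟩) hh
    exact absurd h (by omega)

/-- Reconstruction: a bijection with the same left-set and order-compatibility is `sig'`. -/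
theorem eq_sig' {S : Finset ℕ} (h1 : S ⊆ Finset.range (r + s)) (h2 : S.card = r)
    (τ : Fin (r + s) → Fin r ⊕ Fin s) (hbij : Function.Bijective τ)
    (hmem : ∀ i : Fin (r + s), (i : ℕ) ∈ S ↔ (τ i).isLeft)
    (hL : ∀ (i j : Fin (r + s)) (a a' : Fin r),
      τ i = .inl a → τ j = .inl a' → i < j → a < a')
    (hR : ∀ (i j : Fin (r + s)) (b b' : Fin s),
      τ i = .inr b → τ j = .inr b' → i < j → b < b') :
    τ = sig' r s S := by
  classical
  set E : Fin (r + s) ≃ (Fin r ⊕ Fin s) := Equiv.ofBijective τ hbij with hE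
  have hEapp : ∀ k, E k = τ k := fun k => rfl
  funext k
  by_cases hk : (k : ℕ) ∈ S
  · obtain ⟨a, ha⟩ : ∃ a, τ k = .inl a := by
      have h := (hmem k).1 hk
      cases hτ : τ k with
      | inl a => exact ⟨a, rfl⟩
      | inr b => rw [hτ] at h; simp at h
    rw [sig'_eq_inl h2 hk, ha]
    have hcard : (Finset.filter (fun a' : Fin r => a' < a) Finset.univ).card
        = (S.filter (· < (k : ℕ))).card := by
      apply Finset.card_bij (fun a' _ => ((E.symm (.inl a') : Fin (r + s)) : ℕ))
      · intro a' ha'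
        simp only [Finset.mem_filter, Finset.mem_univ, true_and] at ha'
        have hτ' : τ (E.symm (.inl a')) = .inl a' := by
          rw [← hEapp]; exact E.apply_symm_apply _
        have hlt : E.symm (.inl a') < k := by
          rcases lt_trichotomy (E.symm (.inl a')) k with h | h | h
          · exact h
          · exfalso; rw [h, ha] at hτ'
            exact absurd (Sum.inl_injective hτ').symm (ne_of_lt ha')
          · exact absurd (hL k _ a a' ha hτ' h) (fun hc => absurd (lt_trans hc ha') (lt_irrefl _))
        refine Finset.mem_filter.2 ⟨(hmem _).2 (by rw [hτ']; rfl), hlt⟩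
      · intro a1 ha1 a2 ha2 heq
        exact Sum.inl_injective (E.symm.injective (Fin.val_injective heq))
      · intro x hx
        simp only [Finset.mem_filter] at hx
        have hxk : x < r + s := lt_trans hx.2 k.isLt
        set kx : Fin (r + s) := ⟨x, hxk⟩ with hkx
        obtain ⟨ax, hax⟩ : ∃ ax, τ kx = .inl ax := by
          have h := (hmem kx).1 hx.1
          cases hτ : τ kx with
          | inl a0 => exact ⟨a0, rfl⟩
          | inr b => rw [hτ] at h; simp at h
        have haxa : ax < a := hL kx k ax a hax ha (by exact hx.2)
        refine ⟨ax, by simp [haxa], ?_⟩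
        have : E.symm (.inl ax) = kx := by
          rw [Equiv.symm_apply_eq, hEapp]; exact hax.symm
        rw [this]
    have hIio : (Finset.filter (fun a' : Fin r => a' < a) Finset.univ).card = (a : ℕ) := by
      rw [show Finset.filter (fun a' : Fin r => a' < a) Finset.univ = Finset.Iio a from by
        ext x; simp]
      exact Fin.card_Iio a
    congr 1
    refine Fin.ext ?_
    show (a : ℕ) = (S.filter (· < (k : ℕ))).card
    omega
  · obtain ⟨b, hb⟩ : ∃ b, τ k = .inr b := by
      have h := (hmem k)
      cases hτ : τ k with
      | inl a => rw [hτ] at h; simp at h; exact absurd h hk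
      | inr b => exact ⟨b, rfl⟩
    rw [sig'_eq_inr h1 h2 hk, hb]
    have hcard : (Finset.filter (fun b' : Fin s => b' < b) Finset.univ).card
        = (((Finset.range (r + s)) \ S).filter (· < (k : ℕ))).card := by
      apply Finset.card_bij (fun b' _ => ((E.symm (.inr b') : Fin (r + s)) : ℕ))
      · intro b' hb'
        simp only [Finset.mem_filter, Finset.mem_univ, true_and] at hb'
        have hτ' : τ (E.symm (.inr b')) = .inr b' := by
          rw [← hEapp]; exact E.apply_symm_apply _
        have hlt : E.symm (.inr b') < k := by
          rcases lt_trichotomy (E.symm (.inr b')) k with h | h | h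
          · exact h
          · exfalso; rw [h, hb] at hτ'
            exact absurd (Sum.inr_injective hτ').symm (ne_of_lt hb')
          · exact absurd (hR k _ b b' hb hτ' h) (fun hc => absurd (lt_trans hc hb') (lt_irrefl _))
        have hmem' : ((E.symm (.inr b') : Fin (r + s)) : ℕ) ∉ S := by
          intro hcon
          have := (hmem _).1 hcon
          rw [hτ'] at this; simp at this
        refine Finset.mem_filter.2 ⟨Finset.mem_sdiff.2
          ⟨Finset.mem_range.2 (E.symm (.inr b')).isLt, hmem'⟩, hlt⟩
      · intro b1 hb1 b2 hb2 heq
        exact Sum.inr_injective (E.symm.injective (Fin.val_injective heq))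
      · intro x hx
        simp only [Finset.mem_filter, Finset.mem_sdiff, Finset.mem_range] at hx
        have hxk : x < r + s := hx.1.1
        set kx : Fin (r + s) := ⟨x, hxk⟩ with hkx
        obtain ⟨bx, hbx⟩ : ∃ bx, τ kx = .inr bx := by
          have h := (hmem kx)
          cases hτ : τ kx with
          | inl a0 => rw [hτ] at h; simp at h; exact absurd h hx.1.2
          | inr b0 => exact ⟨b0, rfl⟩
        have hbxb : bx < b := hR kx k bx b hbx hb (by exact hx.2)
        refine ⟨bx, by simp [hbxb], ?_⟩
        have : E.symm (.inr bx) = kx := by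
          rw [Equiv.symm_apply_eq, hEapp]; exact hbx.symm
        rw [this]
    have hIio : (Finset.filter (fun b' : Fin s => b' < b) Finset.univ).card = (b : ℕ) := by
      rw [show Finset.filter (fun b' : Fin s => b' < b) Finset.univ = Finset.Iio b from by
        ext x; simp]
      exact Fin.card_Iio b
    congr 1
    refine Fin.ext ?_
    show (b : ℕ) = (((Finset.range (r + s)) \ S).filter (· < (k : ℕ))).card
    omega

/-- interleaving map -/
def itl (r s : ℕ) (S : Finset ℕ) (p : (Fin r → ℝ) × (Fin s → ℝ)) : Fin (r + s) → ℝ :=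
  fun i => Sum.elim p.1 p.2 (sig' r s S i)

/-- if the interleaving is in the big simplex, the two pieces are in the small simplices -/
theorem mem_prod_of_itl {S : Finset ℕ} (h1 : S ⊆ Finset.range (r + s)) (h2 : S.card = r)
    {p : (Fin r → ℝ) × (Fin s → ℝ)} (hp : itl r s S p ∈ unitSimplex (r + s)) :
    p.1 ∈ unitSimplex r ∧ p.2 ∈ unitSimplex s := by
  classical
  set E : Fin (r + s) ≃ (Fin r ⊕ Fin s) := Equiv.ofBijective _ (sig'_bij h1 h2) with hE
  have hEapp : ∀ k, E k = sig' r s S k := fun k => rfl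
  have hval : ∀ x : Fin r ⊕ Fin s, itl r s S p (E.symm x) = Sum.elim p.1 p.2 x := by
    intro x
    show Sum.elim p.1 p.2 (sig' r s S (E.symm x)) = _
    rw [← hEapp, E.apply_symm_apply]
  constructor
  · constructor
    · intro a a' haa
      rcases eq_or_lt_of_le haa with h | h
      · subst h; exact le_refl _
      · have hk := lt_of_sig'_inl h1 h2 (i := E.symm (.inl a)) (j := E.symm (.inl a'))
          (by rw [← hEapp, E.apply_symm_apply]) (by rw [← hEapp, E.apply_symm_apply]) h
        have := hp.1 _ _ (le_of_lt hk)
        rwa [hval, hval] at this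
    · intro a
      have := hp.2 (E.symm (.inl a))
      rwa [hval] at this
  · constructor
    · intro b b' hbb
      rcases eq_or_lt_of_le hbb with h | h
      · subst h; exact le_refl _
      · have hk := lt_of_sig'_inr h1 h2 (i := E.symm (.inr b)) (j := E.symm (.inr b'))
          (by rw [← hEapp, E.apply_symm_apply]) (by rw [← hEapp, E.apply_symm_apply]) h
        have := hp.1 _ _ (le_of_lt hk)
        rwa [hval, hval] at this
    · intro b
      have := hp.2 (E.symm (.inr b))
      rwa [hval] at this

/-- uniqueness of the shuffle -/
theorem S_unique {p : (Fin r → ℝ) × (Fin s → ℝ)}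
    (hinj : Function.Injective (Sum.elim p.1 p.2))
    {S S' : Finset ℕ} (h1 : S ⊆ Finset.range (r + s)) (h2 : S.card = r)
    (h1' : S' ⊆ Finset.range (r + s)) (h2' : S'.card = r)
    (hA : itl r s S p ∈ unitSimplex (r + s)) (hA' : itl r s S' p ∈ unitSimplex (r + s)) :
    S = S' := by
  classical
  set w : Fin r ⊕ Fin s → ℝ := Sum.elim p.1 p.2 with hw
  have hg : StrictMono (itl r s S p) := by
    refine Monotone.strictMono_of_injective (fun i j hij => hA.1 i j hij) ?_
    exact hinj.comp (sig'_inj h1 h2)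
  have hg' : StrictMono (itl r s S' p) := by
    refine Monotone.strictMono_of_injective (fun i j hij => hA'.1 i j hij) ?_
    exact hinj.comp (sig'_inj h1' h2')
  have hrange : Set.range (itl r s S p) = Set.range (itl r s S' p) := by
    show Set.range (w ∘ sig' r s S) = Set.range (w ∘ sig' r s S')
    rw [Function.Surjective.range_comp (sig'_bij h1 h2).2,
      Function.Surjective.range_comp (sig'_bij h1' h2').2]
  have heq : itl r s S p = itl r s S' p := by
    haveI : WellFoundedLT (Fin (r + s)) := inferInstance
    exact (StrictMono.range_inj (f := itl r s S p) (g := itl r s S' p) hg hg').1 hrange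
  have hsig : sig' r s S = sig' r s S' := by
    funext k
    exact hinj (congrFun heq k)
  ext x
  constructor
  · intro hx
    have hxr : x < r + s := Finset.mem_range.1 (h1 hx)
    by_contra hx'
    have e1 := sig'_eq_inl h2 (i := ⟨x, hxr⟩) hx
    have e2 := sig'_eq_inr h1' h2' (i := ⟨x, hxr⟩) hx'
    rw [hsig, e2] at e1
    simp at e1
  · intro hx
    have hxr : x < r + s := Finset.mem_range.1 (h1' hx)
    by_contra hx'
    have e1 := sig'_eq_inl h2' (i := ⟨x, hxr⟩) hx
    have e2 := sig'_eq_inr h1 h2 (i := ⟨x, hxr⟩) hx'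
    rw [← hsig, e2] at e1
    simp at e1

/-- existence of the shuffle -/
theorem S_exists {p : (Fin r → ℝ) × (Fin s → ℝ)}
    (hinj : Function.Injective (Sum.elim p.1 p.2))
    (hu : p.1 ∈ unitSimplex r) (hv : p.2 ∈ unitSimplex s) :
    ∃ S : Finset ℕ, S ⊆ Finset.range (r + s) ∧ S.card = r ∧
      itl r s S p ∈ unitSimplex (r + s) := by
  classical
  set w : Fin r ⊕ Fin s → ℝ := Sum.elim p.1 p.2 with hw
  set h : Fin (r + s) → ℝ := fun k => w (finSumFinEquiv.symm k) with hh
  set σ₀ := Tuple.sort h with hσ₀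
  set τ : Fin (r + s) → Fin r ⊕ Fin s := fun k => finSumFinEquiv.symm (σ₀ k) with hτ
  have hbij : Function.Bijective τ := finSumFinEquiv.symm.bijective.comp σ₀.bijective
  have hmono : Monotone (w ∘ τ) := Tuple.monotone_sort h
  have hstrict : StrictMono (w ∘ τ) :=
    hmono.strictMono_of_injective (hinj.comp hbij.injective)
  set S : Finset ℕ := (Finset.univ.filter fun k : Fin (r + s) => (τ k).isLeft).image Fin.val
    with hS
  have h1 : S ⊆ Finset.range (r + s) := by
    intro x hx
    obtain ⟨k, _, rfl⟩ := Finset.mem_image.1 hx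
    exact Finset.mem_range.2 k.isLt
  have hmem : ∀ k : Fin (r + s), (k : ℕ) ∈ S ↔ (τ k).isLeft := by
    intro k
    simp only [hS, Finset.mem_image, Finset.mem_filter, Finset.mem_univ, true_and]
    constructor
    · rintro ⟨k', hk', hval⟩
      rwa [← Fin.val_injective hval]
    · intro hk; exact ⟨k, hk, rfl⟩
  have h2 : S.card = r := by
    rw [hS, Finset.card_image_of_injective _ Fin.val_injective]
    have : (Finset.univ.filter fun k : Fin (r + s) => (τ k).isLeft).card
        = (Finset.univ.filter fun x : Fin r ⊕ Fin s => x.isLeft).card := by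
      apply Finset.card_bij (fun k _ => τ k)
      · intro k hk
        simp only [Finset.mem_filter, Finset.mem_univ, true_and] at *
        exact hk
      · intro k1 hk1 k2 hk2 heq
        exact hbij.injective heq
      · intro x hx
        obtain ⟨k, rfl⟩ := hbij.surjective x
        simp only [Finset.mem_filter, Finset.mem_univ, true_and] at hx
        exact ⟨k, by simp [hx], rfl⟩
    rw [this]
    have : (Finset.univ.filter fun x : Fin r ⊕ Fin s => x.isLeft)
        = Finset.univ.image Sum.inl := by
      ext x
      cases x <;> simp [Finset.mem_image]
    rw [this, Finset.card_image_of_injective _ Sum.inl_injective, Finset.card_univ,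
      Fintype.card_fin]
  have hL : ∀ (i j : Fin (r + s)) (a a' : Fin r),
      τ i = .inl a → τ j = .inl a' → i < j → a < a' := by
    intro i j a a' hi hj hij
    have hwlt : w (τ i) < w (τ j) := hstrict hij
    rw [hi, hj] at hwlt
    by_contra hcon
    push_neg at hcon
    exact absurd (hu.1 a' a hcon) (not_le.2 hwlt)
  have hR : ∀ (i j : Fin (r + s)) (b b' : Fin s),
      τ i = .inr b → τ j = .inr b' → i < j → b < b' := by
    intro i j b b' hi hj hij
    have hwlt : w (τ i) < w (τ j) := hstrict hij
    rw [hi, hj] at hwlt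
    by_contra hcon
    push_neg at hcon
    exact absurd (hv.1 b' b hcon) (not_le.2 hwlt)
  have hτsig : τ = sig' r s S := eq_sig' h1 h2 τ hbij hmem hL hR
  refine ⟨S, h1, h2, ?_, ?_⟩
  · intro i j hij
    show w (sig' r s S i) ≤ w (sig' r s S j)
    rw [← hτsig]
    exact hmono hij
  · intro i
    show w (sig' r s S i) ∈ Set.Icc (0 : ℝ) 1
    rw [← hτsig]
    cases hx : τ i with
    | inl a => exact hu.2 a
    | inr b => exact hv.2 b

/-- the interleaving as a measurable equivalence -/
noncomputable def itlEquiv (S : Finset ℕ) (h1 : S ⊆ Finset.range (r + s)) (h2 : S.card = r) :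
    ((Fin r → ℝ) × (Fin s → ℝ)) ≃ᵐ (Fin (r + s) → ℝ) :=
  (MeasurableEquiv.sumPiEquivProdPi (fun _ : Fin r ⊕ Fin s => ℝ)).symm.trans
    (MeasurableEquiv.piCongrLeft (fun _ : Fin (r + s) => ℝ)
      (Equiv.ofBijective _ (sig'_bij h1 h2)).symm)

theorem itlEquiv_coe {S : Finset ℕ} (h1 : S ⊆ Finset.range (r + s)) (h2 : S.card = r) :
    ⇑(itlEquiv S h1 h2) = itl r s S := by
  funext p
  funext i
  set E : Fin (r + s) ≃ (Fin r ⊕ Fin s) := Equiv.ofBijective _ (sig'_bij h1 h2) with hE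
  show (MeasurableEquiv.piCongrLeft (fun _ : Fin (r + s) => ℝ) E.symm)
      ((MeasurableEquiv.sumPiEquivProdPi (fun _ : Fin r ⊕ Fin s => ℝ)).symm p) i = _
  have hw : ((MeasurableEquiv.sumPiEquivProdPi (fun _ : Fin r ⊕ Fin s => ℝ)).symm p)
      = Sum.elim p.1 p.2 := by
    funext x
    cases x with
    | inl a => rfl
    | inr b => rfl
  conv_lhs => rw [show i = E.symm (E i) from (E.symm_apply_apply i).symm]
  rw [MeasurableEquiv.piCongrLeft_apply_apply, hw]
  rfl

theorem itlEquiv_pres {S : Finset ℕ} (h1 : S ⊆ Finset.range (r + s)) (h2 : S.card = r) :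
    MeasurePreserving (⇑(itlEquiv S h1 h2)) volume volume := by
  have h := (volume_measurePreserving_piCongrLeft (fun _ : Fin (r + s) => ℝ)
      (Equiv.ofBijective _ (sig'_bij h1 h2)).symm).comp
    (volume_measurePreserving_sumPiEquivProdPi_symm (fun _ : Fin r ⊕ Fin s => ℝ))
  exact h

theorem itl_measurable (S : Finset ℕ) : Measurable (itl r s S) := by
  refine measurable_pi_lambda _ fun i => ?_
  cases hx : sig' r s S i with
  | inl a => simp only [itl, hx]; exact (measurable_pi_apply a).comp measurable_fst
  | inr b => simp only [itl, hx]; exact (measurable_pi_apply b).comp measurable_snd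

theorem itl_pres {S : Finset ℕ} (h1 : S ⊆ Finset.range (r + s)) (h2 : S.card = r) :
    MeasurePreserving (itl r s S) volume volume := itlEquiv_coe h1 h2 ▸ itlEquiv_pres h1 h2

theorem itl_emb {S : Finset ℕ} (h1 : S ⊆ Finset.range (r + s)) (h2 : S.card = r) :
    MeasurableEmbedding (itl r s S) :=
  itlEquiv_coe h1 h2 ▸ (itlEquiv S h1 h2).measurableEmbedding

theorem key (r s : ℕ) (g : ℕ → ℝ → ℝ) (hg : ∀ i, Integrable (g i)) :
    (∫ t in unitSimplex r, ∏ i : Fin r, g i (t i)) *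
      (∫ t in unitSimplex s, ∏ i : Fin s, g (r + i) (t i)) =
    ∑ S ∈ Finset.powersetCard r (Finset.range (r + s)),
      ∫ t in unitSimplex (r + s), ∏ i : Fin (r + s),
        (if (i : ℕ) ∈ S then
          g ((S.filter (fun j => j < (i : ℕ))).card) (t i)
        else
          g (r + (((Finset.range (r + s)) \ S).filter (fun j => j < (i : ℕ))).card) (t i)) := by
  classical
  set F : (Fin r → ℝ) × (Fin s → ℝ) → ℝ :=
    fun p => (∏ a : Fin r, g (↑a) (p.1 a)) * (∏ b : Fin s, g (r + ↑b) (p.2 b)) with hF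
  have hF1 : Integrable (fun u : Fin r → ℝ => ∏ a : Fin r, g (↑a) (u a)) volume :=
    Integrable.fintype_prod (f := fun a : Fin r => g (a : ℕ)) fun _ => hg _
  have hF2 : Integrable (fun v : Fin s → ℝ => ∏ b : Fin s, g (r + ↑b) (v b)) volume :=
    Integrable.fintype_prod (f := fun b : Fin s => g (r + (b : ℕ))) fun _ => hg _
  have hFint : Integrable F volume := by
    rw [hF, Measure.volume_eq_prod]
    exact hF1.mul_prod hF2
  have hAmeas : ∀ S : Finset ℕ, MeasurableSet (itl r s S ⁻¹' unitSimplex (r + s)) :=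
    fun S => (itl_measurable S) measurableSet_unitSimplex
  have step1 : ∀ S ∈ Finset.powersetCard r (Finset.range (r + s)),
      (∫ t in unitSimplex (r + s), ∏ i : Fin (r + s),
        (if (i : ℕ) ∈ S then
          g ((S.filter (fun j => j < (i : ℕ))).card) (t i)
        else
          g (r + (((Finset.range (r + s)) \ S).filter (fun j => j < (i : ℕ))).card) (t i)))
      = ∫ p, (itl r s S ⁻¹' unitSimplex (r + s)).indicator F p := by
    intro S hS
    obtain ⟨h1, h2⟩ := Finset.mem_powersetCard.1 hS
    have hintg : ∀ t : Fin (r + s) → ℝ,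
        (∏ i : Fin (r + s),
          (if (i : ℕ) ∈ S then
            g ((S.filter (fun j => j < (i : ℕ))).card) (t i)
          else
            g (r + (((Finset.range (r + s)) \ S).filter (fun j => j < (i : ℕ))).card) (t i)))
        = ∏ i : Fin (r + s),
            Sum.elim (fun a : Fin r => g (a : ℕ)) (fun b : Fin s => g (r + (b : ℕ)))
              (sig' r s S i) (t i) := by
      intro t
      refine Finset.prod_congr rfl fun i _ => ?_
      by_cases hi : (i : ℕ) ∈ S
      · rw [if_pos hi, sig'_eq_inl h2 hi]; rfl
      · rw [if_neg hi, sig'_eq_inr h1 h2 hi]; rfl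
    simp only [hintg]
    rw [← (itl_pres h1 h2).setIntegral_preimage_emb (itl_emb h1 h2)]
    have hptw : ∀ p : (Fin r → ℝ) × (Fin s → ℝ),
        (∏ i : Fin (r + s),
          Sum.elim (fun a : Fin r => g (a : ℕ)) (fun b : Fin s => g (r + (b : ℕ)))
            (sig' r s S i) (itl r s S p i)) = F p := by
      intro p
      have hb := Function.Bijective.prod_comp (sig'_bij h1 h2)
        (fun x : Fin r ⊕ Fin s =>
          Sum.elim (fun a : Fin r => g (a : ℕ)) (fun b : Fin s => g (r + (b : ℕ))) x
            (Sum.elim p.1 p.2 x))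
      calc (∏ i : Fin (r + s),
          Sum.elim (fun a : Fin r => g (a : ℕ)) (fun b : Fin s => g (r + (b : ℕ)))
            (sig' r s S i) (itl r s S p i))
          = ∏ x : Fin r ⊕ Fin s,
            Sum.elim (fun a : Fin r => g (a : ℕ)) (fun b : Fin s => g (r + (b : ℕ))) x
              (Sum.elim p.1 p.2 x) := hb
        _ = F p := by rw [Fintype.prod_sum_type]; rfl
    simp only [hptw]
    rw [integral_indicator (hAmeas S)]
  rw [Finset.sum_congr rfl step1]
  rw [← integral_finset_sum _ (fun S _ => hFint.indicator (hAmeas S))]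
  have hae : (fun p => ∑ S ∈ Finset.powersetCard r (Finset.range (r + s)),
        (itl r s S ⁻¹' unitSimplex (r + s)).indicator F p)
      =ᵐ[volume] fun p => ((unitSimplex r ×ˢ unitSimplex s :
        Set ((Fin r → ℝ) × (Fin s → ℝ)))).indicator F p := by
    filter_upwards [ae_injective r s] with p hinj
    by_cases hp : p ∈ (unitSimplex r ×ˢ unitSimplex s : Set ((Fin r → ℝ) × (Fin s → ℝ)))
    · obtain ⟨S₀, h1₀, h2₀, hmem₀⟩ := S_exists hinj hp.1 hp.2
      have hS₀ : S₀ ∈ Finset.powersetCard r (Finset.range (r + s)) :=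
        Finset.mem_powersetCard.2 ⟨h1₀, h2₀⟩
      rw [Finset.sum_eq_single_of_mem S₀ hS₀]
      · rw [Set.indicator_of_mem (Set.mem_preimage.mpr hmem₀) F, Set.indicator_of_mem hp F]
      · intro S hS hne
        obtain ⟨h1, h2⟩ := Finset.mem_powersetCard.1 hS
        refine Set.indicator_of_notMem (fun hmem => hne ?_) F
        exact S_unique hinj h1 h2 h1₀ h2₀ hmem hmem₀
    · rw [Set.indicator_of_notMem hp]
      refine Finset.sum_eq_zero fun S hS => ?_
      obtain ⟨h1, h2⟩ := Finset.mem_powersetCard.1 hS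
      refine Set.indicator_of_notMem (fun hmem => hp ?_) F
      obtain ⟨hu, hv⟩ := mem_prod_of_itl h1 h2 hmem
      exact Set.mem_prod.2 ⟨hu, hv⟩
  rw [integral_congr_ae hae]
  rw [integral_indicator (measurableSet_unitSimplex.prod measurableSet_unitSimplex)]
  rw [Measure.volume_eq_prod]
  exact (setIntegral_prod_mul (μ := (volume : Measure (Fin r → ℝ)))
    (ν := (volume : Measure (Fin s → ℝ)))
    (fun u : Fin r → ℝ => ∏ a : Fin r, g (a : ℕ) (u a))
    (fun v : Fin s → ℝ => ∏ b : Fin s, g (r + (b : ℕ)) (v b))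
    (unitSimplex r) (unitSimplex s)).symm

end ShuffleAux

open ShuffleAux in
/-- The shuffle product formula for iterated integrals: the product of the
iterated integrals of `f 0, …, f (r-1)` and of `f r, …, f (r+s-1)` equals the sum,
over all subsets `S ⊆ {0,…,r+s-1}` of cardinality `r`, of the iterated integral of
the interleaving placing `f 0, …, f (r-1)` (in order) at the positions of `S` and
`f r, …, f (r+s-1)` (in order) at the remaining positions. -/
theorem iteratedIntegral_shuffle (r s : ℕ) (f : ℕ → ℝ → ℝ)
    (hf : ∀ i < r + s, IntegrableOn (f i) (Set.Icc (0 : ℝ) 1)) :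
    (∫ t in unitSimplex r, ∏ i : Fin r, f i (t i)) *
      (∫ t in unitSimplex s, ∏ i : Fin s, f (r + i) (t i)) =
    ∑ S ∈ Finset.powersetCard r (Finset.range (r + s)),
      ∫ t in unitSimplex (r + s), ∏ i : Fin (r + s),
        (if (i : ℕ) ∈ S then
          f ((S.filter (fun j => j < (i : ℕ))).card) (t i)
        else
          f (r + (((Finset.range (r + s)) \ S).filter (fun j => j < (i : ℕ))).card) (t i)) := by
  classical
  set g : ℕ → ℝ → ℝ := fun i => if i < r + s then (Set.Icc (0 : ℝ) 1).indicator (f i) else 0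
    with hgdef
  have hgint : ∀ i, Integrable (g i) volume := by
    intro i
    rw [hgdef]
    by_cases h : i < r + s
    · simp only [if_pos h]
      exact (hf i h).integrable_indicator measurableSet_Icc
    · simp only [if_neg h]
      exact integrable_zero _ _ _
  have hkey := key r s g hgint
  have hL1 : (∫ t in unitSimplex r, ∏ i : Fin r, f i (t i))
      = ∫ t in unitSimplex r, ∏ i : Fin r, g i (t i) := by
    refine setIntegral_congr_fun measurableSet_unitSimplex fun t ht => ?_
    refine Finset.prod_congr rfl fun i _ => ?_
    rw [hgdef]
    simp only
    rw [if_pos (lt_of_lt_of_le i.isLt (Nat.le_add_right r s)),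
      Set.indicator_of_mem (ht.2 i)]
  have hL2 : (∫ t in unitSimplex s, ∏ i : Fin s, f (r + i) (t i))
      = ∫ t in unitSimplex s, ∏ i : Fin s, g (r + i) (t i) := by
    refine setIntegral_congr_fun measurableSet_unitSimplex fun t ht => ?_
    refine Finset.prod_congr rfl fun i _ => ?_
    rw [hgdef]
    simp only
    rw [if_pos (Nat.add_lt_add_left i.isLt r), Set.indicator_of_mem (ht.2 i)]
  have hR : ∀ S ∈ Finset.powersetCard r (Finset.range (r + s)),
      (∫ t in unitSimplex (r + s), ∏ i : Fin (r + s),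
        (if (i : ℕ) ∈ S then
          g ((S.filter (fun j => j < (i : ℕ))).card) (t i)
        else
          g (r + (((Finset.range (r + s)) \ S).filter (fun j => j < (i : ℕ))).card) (t i)))
      = ∫ t in unitSimplex (r + s), ∏ i : Fin (r + s),
        (if (i : ℕ) ∈ S then
          f ((S.filter (fun j => j < (i : ℕ))).card) (t i)
        else
          f (r + (((Finset.range (r + s)) \ S).filter (fun j => j < (i : ℕ))).card) (t i)) := by
    intro S hS
    obtain ⟨h1, h2⟩ := Finset.mem_powersetCard.1 hS
    refine setIntegral_congr_fun measurableSet_unitSimplex fun t ht => ?_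
    refine Finset.prod_congr rfl fun i _ => ?_
    by_cases hi : (i : ℕ) ∈ S
    · rw [if_pos hi, if_pos hi, hgdef]
      simp only
      rw [if_pos (lt_of_lt_of_le (cardL h2 hi) (Nat.le_add_right r s)),
        Set.indicator_of_mem (ht.2 i)]
    · rw [if_neg hi, if_neg hi, hgdef]
      simp only
      rw [if_pos (Nat.add_lt_add_left (cardR h1 h2 i.isLt hi) r),
        Set.indicator_of_mem (ht.2 i)]
  rw [hL1, hL2, hkey]
  exact Finset.sum_congr rfl hR
end

section
/- Let f_1, …, f_n : [0,1] → ℝ be integrable and let c ∈ [0,1]. Then the integral of f_1(t_1)⋯f_n(t_n) over the simplex 0 ≤ t_1 ≤ ⋯ ≤ t_n ≤ 1 equals ∑_{i=0}^{n} A_i · B_i, where A_i is the integral of f_1(t_1)⋯f_i(t_i) over the simplex 0 ≤ t_1 ≤ ⋯ ≤ t_i ≤ c and B_i is the integral of f_{i+1}(t_{i+1})⋯f_n(t_n) over the simplex c ≤ t_{i+1} ≤ ⋯ ≤ t_n ≤ 1 (the composition-of-paths formula for iterated integrals). -/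
open MeasureTheory

/-- The closed simplex `a ≤ t 0 ≤ t 1 ≤ ⋯ ≤ t (n-1) ≤ b` in `Fin n → ℝ`. -/
def orderedSimplex (n : ℕ) (a b : ℝ) : Set (Fin n → ℝ) :=
  {t | (∀ i j : Fin n, i ≤ j → t i ≤ t j) ∧ ∀ i, t i ∈ Set.Icc a b}

/-- The piece of the simplex where the first `i` coordinates are `≤ c` and the rest are `> c`. -/
def simplexPart (n i : ℕ) (c : ℝ) : Set (Fin n → ℝ) :=
  {t | (∀ a b : Fin n, a ≤ b → t a ≤ t b) ∧ (∀ j, t j ∈ Set.Icc (0 : ℝ) 1) ∧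
       (∀ j : Fin n, (j : ℕ) < i → t j ≤ c) ∧ (∀ j : Fin n, i ≤ (j : ℕ) → c < t j)}

lemma measurableSet_mono (n : ℕ) :
    MeasurableSet {t : Fin n → ℝ | ∀ i j : Fin n, i ≤ j → t i ≤ t j} := by
  rw [show {t : Fin n → ℝ | ∀ i j : Fin n, i ≤ j → t i ≤ t j}
      = ⋂ (i) (j) (_ : i ≤ j), {t : Fin n → ℝ | t i ≤ t j} by ext t; simp [Set.mem_iInter]]
  exact MeasurableSet.iInter fun i => MeasurableSet.iInter fun j => MeasurableSet.iInter fun _ =>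
    measurableSet_le (measurable_pi_apply i) (measurable_pi_apply j)

lemma measurableSet_box (n : ℕ) (a b : ℝ) :
    MeasurableSet {t : Fin n → ℝ | ∀ j, t j ∈ Set.Icc a b} := by
  rw [show {t : Fin n → ℝ | ∀ j, t j ∈ Set.Icc a b}
      = ⋂ j, (fun t : Fin n → ℝ => t j) ⁻¹' Set.Icc a b by ext t; simp [Set.mem_iInter]]
  exact MeasurableSet.iInter fun j => (measurable_pi_apply j) measurableSet_Icc

lemma measurableSet_simplexPart (n i : ℕ) (c : ℝ) : MeasurableSet (simplexPart n i c) := by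
  have h3 : MeasurableSet {t : Fin n → ℝ | ∀ j : Fin n, (j : ℕ) < i → t j ≤ c} := by
    rw [show {t : Fin n → ℝ | ∀ j : Fin n, (j : ℕ) < i → t j ≤ c}
        = ⋂ (j : Fin n) (_ : (j : ℕ) < i), {t : Fin n → ℝ | t j ≤ c} by
          ext t; simp [Set.mem_iInter]]
    exact MeasurableSet.iInter fun j => MeasurableSet.iInter fun _ =>
      measurableSet_le (measurable_pi_apply j) measurable_const
  have h4 : MeasurableSet {t : Fin n → ℝ | ∀ j : Fin n, i ≤ (j : ℕ) → c < t j} := by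
    rw [show {t : Fin n → ℝ | ∀ j : Fin n, i ≤ (j : ℕ) → c < t j}
        = ⋂ (j : Fin n) (_ : i ≤ (j : ℕ)), {t : Fin n → ℝ | c < t j} by
          ext t; simp [Set.mem_iInter]]
    exact MeasurableSet.iInter fun j => MeasurableSet.iInter fun _ =>
      measurableSet_lt measurable_const (measurable_pi_apply j)
  exact (measurableSet_mono n).inter (((measurableSet_box n 0 1).inter (h3.inter h4)))

lemma integrableOn_prodFn (n : ℕ) (f : ℕ → ℝ → ℝ)
    (hf : ∀ i < n, IntegrableOn (f i) (Set.Icc (0 : ℝ) 1))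
    {S : Set (Fin n → ℝ)} (hS : MeasurableSet S)
    (hsub : ∀ t ∈ S, ∀ j : Fin n, t j ∈ Set.Icc (0 : ℝ) 1) :
    IntegrableOn (fun t : Fin n → ℝ => ∏ j : Fin n, f j (t j)) S := by
  have hg : ∀ j : Fin n, Integrable ((Set.Icc (0 : ℝ) 1).indicator (f (j : ℕ))) := fun j =>
    (integrable_indicator_iff measurableSet_Icc).2 (hf j j.isLt)
  have h : Integrable
      (fun t : Fin n → ℝ => ∏ j : Fin n, (Set.Icc (0 : ℝ) 1).indicator (f (j : ℕ)) (t j)) :=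
    Integrable.fin_nat_prod hg
  refine (h.integrableOn).congr_fun (fun t ht => ?_) hS
  exact Finset.prod_congr rfl fun j _ => Set.indicator_of_mem (hsub t ht j) _

lemma simplex_eq_biUnion (n : ℕ) (c : ℝ) :
    orderedSimplex n 0 1 = ⋃ i ∈ Finset.range (n + 1), simplexPart n i c := by
  ext t
  simp only [Set.mem_iUnion, Finset.mem_range]
  constructor
  · rintro ⟨hmono, hmem⟩
    classical
    have hP : ∃ m, ∀ j : Fin n, m ≤ (j : ℕ) → c < t j :=
      ⟨n, fun j hj => absurd j.isLt (by omega)⟩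
    refine ⟨Nat.find hP, ?_, hmono, hmem, ?_, Nat.find_spec hP⟩
    · by_contra h
      push_neg at h
      exact absurd (fun (j : Fin n) hj => absurd j.isLt (by omega))
        (Nat.find_min hP (show n < Nat.find hP by omega))
    · intro j hj
      by_contra h
      push_neg at h
      exact absurd (fun (j' : Fin n) hj' => lt_of_lt_of_le h (hmono j j' (Fin.le_def.2 hj')))
        (Nat.find_min hP hj)
  · rintro ⟨i, _, h1, h2, _, _⟩
    exact ⟨h1, h2⟩

lemma simplexPart_disjoint_aux (n : ℕ) (c : ℝ) {i j : ℕ} (h : i < j) (hj : j < n + 1) :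
    Disjoint (simplexPart n i c) (simplexPart n j c) := by
  refine Set.disjoint_left.2 fun t ht ht' => ?_
  have hin : i < n := by omega
  have h1 := ht.2.2.2 ⟨i, hin⟩ (le_refl i)
  have h2 := ht'.2.2.1 ⟨i, hin⟩ h
  exact absurd h1 (not_lt.2 h2)

lemma simplexPart_disjoint (n : ℕ) (c : ℝ) :
    Set.Pairwise ↑(Finset.range (n + 1)) (Function.onFun Disjoint fun i => simplexPart n i c) := by
  intro i hi j hj hij
  simp only [Finset.coe_range, Set.mem_Iio] at hi hj
  rcases lt_or_gt_of_ne hij with h | h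
  · exact simplexPart_disjoint_aux n c h hj
  · exact (simplexPart_disjoint_aux n c h hi).symm

lemma fin_add_cases {m k : ℕ} (j : Fin (m + k)) :
    (∃ a : Fin m, j = Fin.castAdd k a) ∨ ∃ b : Fin k, j = Fin.natAdd m b := by
  rcases lt_or_ge (j : ℕ) m with h | h
  · exact Or.inl ⟨⟨j, h⟩, by ext; simp⟩
  · refine Or.inr ⟨⟨(j : ℕ) - m, by omega⟩, ?_⟩
    ext
    simp only [Fin.coe_natAdd]
    omega

lemma key_piece (m k : ℕ) (c : ℝ) (hc0 : 0 ≤ c) (hc1 : c ≤ 1) (f : ℕ → ℝ → ℝ) :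
    (∫ t in simplexPart (m + k) m c, ∏ j : Fin (m + k), f j (t j)) =
    (∫ t in orderedSimplex m 0 c, ∏ j : Fin m, f j (t j)) *
      (∫ t in orderedSimplex k c 1, ∏ j : Fin k, f (m + j) (t j)) := by
  classical
  set e : ((Fin m → ℝ) × (Fin k → ℝ)) ≃ᵐ (Fin (m + k) → ℝ) :=
    (MeasurableEquiv.sumPiEquivProdPi (fun _ : Fin m ⊕ Fin k => ℝ)).symm.trans
      (MeasurableEquiv.piCongrLeft (fun _ => ℝ) finSumFinEquiv) with he_def
  have he : ∀ z : (Fin m → ℝ) × (Fin k → ℝ), e z = Fin.append z.1 z.2 := by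
    rintro ⟨x, y⟩
    funext j
    obtain ⟨s, rfl⟩ := finSumFinEquiv.surjective j
    have h0 : e (x, y) = (Equiv.piCongrLeft (fun _ : Fin (m + k) => ℝ) finSumFinEquiv)
        ((Equiv.sumPiEquivProdPi (fun _ : Fin m ⊕ Fin k => ℝ)).symm (x, y)) := by
      simp only [he_def, MeasurableEquiv.trans_apply, MeasurableEquiv.coe_piCongrLeft,
        MeasurableEquiv.coe_sumPiEquivProdPi_symm]
    rw [h0]
    cases s with
    | inl a =>
      rw [Equiv.piCongrLeft_sumInl, finSumFinEquiv_apply_left, Fin.append_left]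
    | inr b =>
      rw [Equiv.piCongrLeft_sumInr, finSumFinEquiv_apply_right, Fin.append_right]
  have hmp : MeasurePreserving (⇑e) volume volume := by
    have := (volume_measurePreserving_piCongrLeft (fun _ : Fin (m + k) => ℝ)
        finSumFinEquiv).comp
      (volume_measurePreserving_sumPiEquivProdPi_symm (fun _ : Fin m ⊕ Fin k => ℝ))
    exact this
  set B : Set (Fin k → ℝ) :=
    {y | (∀ a b : Fin k, a ≤ b → y a ≤ y b) ∧ ∀ j, y j ∈ Set.Ioc c 1} with hB_def
  have hpre : ⇑e ⁻¹' simplexPart (m + k) m c = (orderedSimplex m 0 c) ×ˢ B := by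
    ext ⟨x, y⟩
    simp only [Set.mem_preimage, Set.mem_prod, he]
    constructor
    · rintro ⟨hmono, hIcc, hle, hgt⟩
      refine ⟨⟨fun a b hab => ?_, fun j => ⟨?_, ?_⟩⟩, fun a b hab => ?_, fun j => ⟨?_, ?_⟩⟩
      · have := hmono (Fin.castAdd k a) (Fin.castAdd k b)
          (by rw [Fin.le_def] at hab ⊢; simpa using hab)
        simpa [Fin.append_left] using this
      · have := (hIcc (Fin.castAdd k j)).1
        simpa [Fin.append_left] using this
      · have := hle (Fin.castAdd k j) (by simp)
        simpa [Fin.append_left] using this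
      · have := hmono (Fin.natAdd m a) (Fin.natAdd m b)
          (by simp only [Fin.le_def, Fin.coe_natAdd]; omega)
        simpa [Fin.append_right] using this
      · have := hgt (Fin.natAdd m j) (by simp)
        simpa [Fin.append_right] using this
      · have := (hIcc (Fin.natAdd m j)).2
        simpa [Fin.append_right] using this
    · rintro ⟨⟨hx1, hx2⟩, hy1, hy2⟩
      refine ⟨fun a b hab => ?_, fun j => ?_, fun j hj => ?_, fun j hj => ?_⟩
      · rcases fin_add_cases a with ⟨a', rfl⟩ | ⟨a', rfl⟩ <;>
          rcases fin_add_cases b with ⟨b', rfl⟩ | ⟨b', rfl⟩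
        · rw [Fin.append_left, Fin.append_left]
          exact hx1 a' b' (by rw [Fin.le_def] at hab ⊢; simpa using hab)
        · rw [Fin.append_left, Fin.append_right]
          exact ((hx2 a').2).trans (hy2 b').1.le
        · exfalso
          simp only [Fin.le_def, Fin.coe_castAdd, Fin.coe_natAdd] at hab
          omega
        · rw [Fin.append_right, Fin.append_right]
          exact hy1 a' b' (by simp only [Fin.le_def, Fin.coe_natAdd] at hab ⊢; omega)
      · rcases fin_add_cases j with ⟨a', rfl⟩ | ⟨b', rfl⟩
        · rw [Fin.append_left]
          exact ⟨(hx2 a').1, (hx2 a').2.trans hc1⟩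
        · rw [Fin.append_right]
          exact ⟨hc0.trans (hy2 b').1.le, (hy2 b').2⟩
      · rcases fin_add_cases j with ⟨a', rfl⟩ | ⟨b', rfl⟩
        · rw [Fin.append_left]; exact (hx2 a').2
        · exfalso; simp only [Fin.coe_natAdd] at hj; omega
      · rcases fin_add_cases j with ⟨a', rfl⟩ | ⟨b', rfl⟩
        · exfalso; simp only [Fin.coe_castAdd] at hj; omega
        · rw [Fin.append_right]; exact (hy2 b').1
  have hBae : B =ᵐ[volume] orderedSimplex k c 1 := by
    refine MeasureTheory.ae_eq_set.2 ⟨?_, ?_⟩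
    · have : B \ orderedSimplex k c 1 = ∅ := by
        rw [Set.diff_eq_empty]
        rintro y ⟨h1, h2⟩
        exact ⟨h1, fun j => ⟨(h2 j).1.le, (h2 j).2⟩⟩
      rw [this]; simp
    · have hnull : volume (⋃ j : Fin k, {y : Fin k → ℝ | y j = c}) = 0 := by
        refine measure_iUnion_null fun j => ?_
        rw [volume_pi]
        exact Measure.pi_hyperplane (fun _ : Fin k => (volume : Measure ℝ)) j c
      refine measure_mono_null ?_ hnull
      rintro y ⟨⟨h1, h2⟩, h3⟩
      simp only [hB_def, Set.mem_setOf_eq, not_and, not_forall] at h3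
      obtain ⟨j, hj⟩ := h3 h1
      refine Set.mem_iUnion.2 ⟨j, ?_⟩
      have h4 := h2 j
      simp only [Set.mem_Ioc, Set.mem_Icc] at hj h4
      have h5 : y j ≤ c := by
        by_contra hcon
        exact hj ⟨lt_of_not_ge hcon, h4.2⟩
      exact le_antisymm h5 (h2 j).1
  have hprod : ∀ z : (Fin m → ℝ) × (Fin k → ℝ),
      (∏ j : Fin (m + k), f j (e z j)) =
      (∏ j : Fin m, f j (z.1 j)) * ∏ j : Fin k, f (m + (j : ℕ)) (z.2 j) := by
    rintro ⟨x, y⟩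
    rw [he]
    rw [Fin.prod_univ_add]
    congr 1
    · exact Finset.prod_congr rfl fun a _ => by
        rw [Fin.append_left]; simp
    · exact Finset.prod_congr rfl fun b _ => by
        rw [Fin.append_right]; simp
  calc (∫ t in simplexPart (m + k) m c, ∏ j : Fin (m + k), f j (t j))
      = ∫ z in ⇑e ⁻¹' simplexPart (m + k) m c, ∏ j : Fin (m + k), f j (e z j) := by
        exact (hmp.setIntegral_preimage_emb e.measurableEmbedding _ _).symm
    _ = ∫ z in (orderedSimplex m 0 c) ×ˢ B,
          (∏ j : Fin m, f j (z.1 j)) * ∏ j : Fin k, f (m + (j : ℕ)) (z.2 j) := by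
        rw [hpre]
        simp_rw [hprod]
    _ = (∫ x in orderedSimplex m 0 c, ∏ j : Fin m, f j (x j)) *
          ∫ y in B, ∏ j : Fin k, f (m + (j : ℕ)) (y j) := by
        rw [Measure.volume_eq_prod, ← Measure.prod_restrict]
        exact integral_prod_mul (L := ℝ) (μ := volume.restrict (orderedSimplex m 0 c))
          (ν := volume.restrict B) (fun x : Fin m → ℝ => ∏ j : Fin m, f (j : ℕ) (x j))
          (fun y : Fin k → ℝ => ∏ j : Fin k, f (m + (j : ℕ)) (y j))
    _ = (∫ t in orderedSimplex m 0 c, ∏ j : Fin m, f j (t j)) *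
          (∫ t in orderedSimplex k c 1, ∏ j : Fin k, f (m + j) (t j)) := by
        rw [setIntegral_congr_set hBae]

/-- The composition-of-paths formula for iterated integrals: for `c ∈ [0,1]`, the
integral of `f 0 (t 0) ⋯ f (n-1) (t (n-1))` over the simplex
`0 ≤ t 0 ≤ ⋯ ≤ t (n-1) ≤ 1` equals `∑_{i=0}^{n} A i * B i`, where `A i` integrates
the first `i` functions over the simplex with entries in `[0, c]` and `B i`
integrates the remaining `n - i` functions over the simplex with entries in `[c, 1]`. -/
theorem iteratedIntegral_comp_paths (n : ℕ) (c : ℝ) (hc : c ∈ Set.Icc (0 : ℝ) 1)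
    (f : ℕ → ℝ → ℝ) (hf : ∀ i < n, IntegrableOn (f i) (Set.Icc (0 : ℝ) 1)) :
    (∫ t in orderedSimplex n 0 1, ∏ i : Fin n, f i (t i)) =
    ∑ i ∈ Finset.range (n + 1),
      (∫ t in orderedSimplex i 0 c, ∏ j : Fin i, f j (t j)) *
        (∫ t in orderedSimplex (n - i) c 1, ∏ j : Fin (n - i), f (i + j) (t j)) := by
  obtain ⟨hc0, hc1⟩ := hc
  rw [simplex_eq_biUnion n c,
    integral_biUnion_finset _ (fun i _ => measurableSet_simplexPart n i c)
      (simplexPart_disjoint n c)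
      (fun i _ => integrableOn_prodFn n f hf (measurableSet_simplexPart n i c)
        (fun t ht j => ht.2.1 j))]
  refine Finset.sum_congr rfl fun i hi => ?_
  obtain ⟨k, hk⟩ : ∃ k, n = i + k := ⟨n - i, by
    have := Finset.mem_range.mp hi; omega⟩
  subst hk
  have hik : i + k - i = k := by omega
  rw [hik]
  exact key_piece i k c hc0 hc1 f
end

section
/- Euler's identity ζ(3) = ζ(1,2) holds, i.e. ∑_{k≥1} 1/k³ = ∑_{0<j<k} 1/(j·k²). -/
open Finset

noncomputable def Hh (n : ℕ) : ℝ := ∑ i ∈ Finset.range n, 1/((i:ℝ)+1)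

lemma Hh_succ (n : ℕ) : Hh (n+1) = Hh n + 1/((n:ℝ)+1) := Finset.sum_range_succ _ n

lemma Hh_nonneg (n : ℕ) : 0 ≤ Hh n := Finset.sum_nonneg fun i _ => by positivity

lemma rpow_helper {s t : ℝ} (hs : 0 < s) (ht : 0 < t) :
    s ^ ((3:ℝ)/2) * t ^ ((3:ℝ)/2) = s * t * Real.sqrt (s*t) := by
  rw [← Real.mul_rpow hs.le ht.le, show (3:ℝ)/2 = 1 + 1/2 by norm_num,
    Real.rpow_add (by positivity), Real.rpow_one, ← Real.sqrt_eq_rpow]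

lemma sqrt_le_add {s t : ℝ} (hs : 0 ≤ s) (ht : 0 ≤ t) : Real.sqrt (s*t) ≤ s + t := by
  have h1 : s * t ≤ (s+t)^2 := by nlinarith
  calc Real.sqrt (s*t) ≤ Real.sqrt ((s+t)^2) := Real.sqrt_le_sqrt h1
    _ = s + t := Real.sqrt_sq (by positivity)

noncomputable def mM (n : ℕ) : ℝ := 1/((n:ℝ)+1) ^ ((3:ℝ)/2)
noncomputable def mM0 (n : ℕ) : ℝ := 1/((n:ℝ)) ^ ((3:ℝ)/2)

lemma sum32' : Summable mM := by
  have h := (summable_nat_add_iff 1).2 (Real.summable_one_div_nat_rpow.2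
    (show (1:ℝ) < 3/2 by norm_num))
  refine h.congr fun n => ?_
  unfold mM
  push_cast
  ring_nf

lemma sumM : Summable (fun p : ℕ×ℕ => mM p.1 * mM p.2) :=
  sum32'.mul_of_nonneg sum32' (fun _ => by unfold mM; positivity)
    (fun _ => by unfold mM; positivity)

lemma sumM0 : Summable (fun p : ℕ×ℕ => mM0 p.1 * mM0 p.2) := by
  have h : Summable mM0 := Real.summable_one_div_nat_rpow.2 (show (1:ℝ) < 3/2 by norm_num)
  exact h.mul_of_nonneg h (fun _ => by unfold mM0; positivity)
    (fun _ => by unfold mM0; positivity)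

noncomputable def Ff (p : ℕ×ℕ) : ℝ := 1/(((p.1:ℝ)+1)*((p.2:ℝ)+1)*((p.1:ℝ)+(p.2:ℝ)+2))
noncomputable def Gg (p : ℕ×ℕ) : ℝ := 1/(((p.1:ℝ)+1)*((p.1:ℝ)+(p.2:ℝ)+2)^2)
noncomputable def Ii (p : ℕ×ℕ) : ℝ := if 0 < p.1 ∧ p.1 < p.2 then 1/((p.1:ℝ)*(p.2:ℝ)^2) else 0

lemma Ff_nonneg (p : ℕ×ℕ) : 0 ≤ Ff p := by unfold Ff; positivity
lemma Gg_nonneg (p : ℕ×ℕ) : 0 ≤ Gg p := by unfold Gg; positivity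
lemma Ii_nonneg (p : ℕ×ℕ) : 0 ≤ Ii p := by
  unfold Ii; split <;> positivity

lemma SF : Summable Ff := by
  refine sumM.of_nonneg_of_le Ff_nonneg fun p => ?_
  obtain ⟨a, b⟩ := p
  show 1/(((a:ℝ)+1)*((b:ℝ)+1)*((a:ℝ)+(b:ℝ)+2)) ≤ mM a * mM b
  unfold mM
  set s : ℝ := (a:ℝ)+1 with hsdef
  set t : ℝ := (b:ℝ)+1 with htdef
  have hs : (0:ℝ) < s := by positivity
  have ht : (0:ℝ) < t := by positivity
  have hst : (a:ℝ)+(b:ℝ)+2 = s + t := by rw [hsdef, htdef]; ring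
  rw [hst, div_mul_div_comm, one_mul, rpow_helper hs ht]
  apply one_div_le_one_div_of_le (by positivity)
  have h1 := sqrt_le_add hs.le ht.le
  nlinarith [Real.sqrt_nonneg (s*t), mul_pos hs ht]

lemma SG : Summable Gg := by
  refine sumM.of_nonneg_of_le Gg_nonneg fun p => ?_
  obtain ⟨a, b⟩ := p
  show 1/(((a:ℝ)+1)*((a:ℝ)+(b:ℝ)+2)^2) ≤ mM a * mM b
  unfold mM
  set s : ℝ := (a:ℝ)+1 with hsdef
  set t : ℝ := (b:ℝ)+1 with htdef
  have hs : (0:ℝ) < s := by positivity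
  have ht : (0:ℝ) < t := by positivity
  have hst : (a:ℝ)+(b:ℝ)+2 = s + t := by rw [hsdef, htdef]; ring
  rw [hst, div_mul_div_comm, one_mul, rpow_helper hs ht]
  apply one_div_le_one_div_of_le (by positivity)
  have h1 := sqrt_le_add hs.le ht.le
  have h2 : t * Real.sqrt (s*t) ≤ (s+t)*(s+t) :=
    mul_le_mul (by linarith) h1 (Real.sqrt_nonneg _) (by linarith)
  calc s*t*Real.sqrt (s*t) = s*(t*Real.sqrt (s*t)) := by ring
    _ ≤ s*((s+t)*(s+t)) := by nlinarith
    _ = s*(s+t)^2 := by ring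

lemma SI : Summable Ii := by
  refine sumM0.of_nonneg_of_le Ii_nonneg fun p => ?_
  obtain ⟨m, n⟩ := p
  show Ii (m, n) ≤ mM0 m * mM0 n
  unfold Ii mM0
  split
  · next h =>
    obtain ⟨h1, h2⟩ := h
    have hs : (0:ℝ) < (m:ℝ) := by exact_mod_cast h1
    have ht : (0:ℝ) < (n:ℝ) := by exact_mod_cast h1.trans h2
    have hmn : (m:ℝ) ≤ (n:ℝ) := by exact_mod_cast h2.le
    rw [div_mul_div_comm, one_mul, rpow_helper hs ht]
    apply one_div_le_one_div_of_le (by positivity)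
    have h1' : Real.sqrt ((m:ℝ)*(n:ℝ)) ≤ (n:ℝ) := by
      calc Real.sqrt ((m:ℝ)*(n:ℝ)) ≤ Real.sqrt ((n:ℝ)^2) :=
            Real.sqrt_le_sqrt (by nlinarith)
        _ = (n:ℝ) := Real.sqrt_sq ht.le
    calc (m:ℝ)*(n:ℝ)*Real.sqrt ((m:ℝ)*(n:ℝ)) ≤ (m:ℝ)*(n:ℝ)*(n:ℝ) :=
          mul_le_mul_of_nonneg_left h1' (by positivity)
      _ = (m:ℝ)*(n:ℝ)^2 := by ring
  · positivity

noncomputable def gg (i : ℕ) : ℝ := 1/((i:ℝ)+1)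

lemma Hh_eq (n : ℕ) : Hh n = ∑ i ∈ Finset.range n, gg i := rfl

lemma tel (d : ℕ) (hd : 0 < d) :
    HasSum (fun k : ℕ => 1/(((k:ℝ)+1)*((k:ℝ)+1+(d:ℝ)))) (Hh d / d) := by
  have hdR : (0:ℝ) < d := by exact_mod_cast hd
  set f : ℕ → ℝ := fun k => 1/(((k:ℝ)+1)*((k:ℝ)+1+(d:ℝ))) with hf
  have hpos : ∀ k, 0 ≤ f k := fun k => by rw [hf]; positivity
  have hsum : Summable f := by
    have base : Summable (fun k : ℕ => 1/((k:ℝ)+1)^2) := by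
      have h := (summable_nat_add_iff 1).2 (Real.summable_one_div_nat_pow.2 one_lt_two)
      refine h.congr fun n => ?_
      push_cast
      ring
    refine base.of_nonneg_of_le hpos fun k => ?_
    rw [hf]
    apply one_div_le_one_div_of_le (by positivity)
    nlinarith [Nat.cast_nonneg (α := ℝ) k]
  have hterm : ∀ k : ℕ, f k = (gg k - gg (d+k)) / d := by
    intro k
    rw [hf]
    unfold gg
    push_cast
    have h1 : ((k:ℝ)+1) ≠ 0 := by positivity
    have h2 : ((d:ℝ)+(k:ℝ)+1) ≠ 0 := by positivity
    field_simp
    ring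
  have hps : ∀ N : ℕ, ∑ k ∈ Finset.range N, f k
      = (Hh d - ∑ i ∈ Finset.range d, gg (N+i)) / d := by
    intro N
    simp_rw [hterm]
    rw [← Finset.sum_div]
    congr 1
    rw [Finset.sum_sub_distrib]
    have e1 := Finset.sum_range_add gg N d
    have e2 := Finset.sum_range_add gg d N
    rw [Nat.add_comm d N] at e2
    rw [Hh_eq]
    linarith
  have hten : Filter.Tendsto (fun N : ℕ => ∑ i ∈ Finset.range d, gg (N+i))
      Filter.atTop (nhds 0) := by
    apply squeeze_zero (fun N => Finset.sum_nonneg fun i _ => by unfold gg; positivity)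
      (g := fun N : ℕ => (d:ℝ) * (1/((N:ℝ)+1)))
    · intro N
      calc ∑ i ∈ Finset.range d, gg (N+i) ≤ ∑ _i ∈ Finset.range d, 1/((N:ℝ)+1) := by
            apply Finset.sum_le_sum
            intro i _
            unfold gg
            apply one_div_le_one_div_of_le (by positivity)
            push_cast
            linarith [Nat.cast_nonneg (α := ℝ) i]
        _ = (d:ℝ) * (1/((N:ℝ)+1)) := by
            rw [Finset.sum_const, Finset.card_range, nsmul_eq_mul]
    · have := tendsto_one_div_add_atTop_nhds_zero_nat.const_mul (d:ℝ)
      simpa using this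
  have h2 : Filter.Tendsto (fun N => ∑ k ∈ Finset.range N, f k)
      Filter.atTop (nhds ((Hh d)/d)) := by
    simp_rw [hps]
    have : Filter.Tendsto (fun _ : ℕ => Hh d) Filter.atTop (nhds (Hh d)) := tendsto_const_nhds
    have := this.sub hten
    have := this.div_const (d:ℝ)
    simpa using this
  have h3 := hsum.hasSum.tendsto_sum_nat
  have h4 : ∑' k, f k = Hh d / d := tendsto_nhds_unique h3 h2
  exact h4 ▸ hsum.hasSum

lemma rowF (j : ℕ) : ∑' k, Ff (j,k) = Hh (j+1) / ((j:ℝ)+1)^2 := by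
  have h := tel (j+1) j.succ_pos
  have hpt : ∀ k : ℕ, Ff (j,k)
      = (1/((j:ℝ)+1)) * (1/(((k:ℝ)+1)*((k:ℝ)+1+((j+1:ℕ):ℝ)))) := by
    intro k
    unfold Ff
    rw [div_mul_div_comm, one_mul]
    congr 1
    push_cast
    ring
  calc ∑' k, Ff (j,k)
      = ∑' k : ℕ, (1/((j:ℝ)+1)) * (1/(((k:ℝ)+1)*((k:ℝ)+1+((j+1:ℕ):ℝ)))) := tsum_congr hpt
    _ = (1/((j:ℝ)+1)) * ∑' k : ℕ, (1/(((k:ℝ)+1)*((k:ℝ)+1+((j+1:ℕ):ℝ)))) := tsum_mul_left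
    _ = (1/((j:ℝ)+1)) * (Hh (j+1) / ((j+1:ℕ):ℝ)) := by rw [h.tsum_eq]
    _ = Hh (j+1) / ((j:ℝ)+1)^2 := by
        have hj : ((j:ℝ)+1) ≠ 0 := by positivity
        push_cast
        rw [one_div, inv_mul_eq_div, div_div]
        ring_nf

lemma SrowF : Summable (fun j : ℕ => Hh (j+1)/((j:ℝ)+1)^2) := by
  have h := ((summable_prod_of_nonneg Ff_nonneg).1 SF).2
  exact h.congr fun j => rowF j

lemma L3 : ∑' p : ℕ×ℕ, Ff p = ∑' j : ℕ, Hh (j+1)/((j:ℝ)+1)^2 := by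
  rw [Summable.tsum_prod' SF (fun j => SF.prod_factor j)]
  exact tsum_congr rowF

lemma L1 : ∑' p : ℕ×ℕ, Ff p = 2 * ∑' p : ℕ×ℕ, Gg p := by
  have hpt : ∀ p : ℕ×ℕ, Ff p = Gg p + Gg p.swap := by
    rintro ⟨a,b⟩
    show Ff (a,b) = Gg (a,b) + Gg (b,a)
    unfold Ff Gg
    have h1 : ((a:ℝ)+1) ≠ 0 := by positivity
    have h2 : ((b:ℝ)+1) ≠ 0 := by positivity
    have h3 : ((a:ℝ)+(b:ℝ)+2) ≠ 0 := by positivity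
    have h4 : ((b:ℝ)+(a:ℝ)+2) ≠ 0 := by positivity
    field_simp
    ring
  have hswap : Summable (fun p : ℕ×ℕ => Gg p.swap) :=
    (Equiv.prodComm ℕ ℕ).summable_iff.2 SG
  have hswapEq : ∑' p : ℕ×ℕ, Gg p.swap = ∑' p : ℕ×ℕ, Gg p :=
    (Equiv.prodComm ℕ ℕ).tsum_eq Gg
  calc ∑' p : ℕ×ℕ, Ff p = ∑' p : ℕ×ℕ, (Gg p + Gg p.swap) := tsum_congr hpt
    _ = (∑' p : ℕ×ℕ, Gg p) + ∑' p : ℕ×ℕ, Gg p.swap := Summable.tsum_add SG hswap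
    _ = 2 * ∑' p : ℕ×ℕ, Gg p := by rw [hswapEq]; ring

def eS : ℕ×ℕ ≃ {p : ℕ × ℕ // 0 < p.1 ∧ p.1 < p.2} where
  toFun x := ⟨(x.1+1, x.1+x.2+2), by constructor <;> omega⟩
  invFun y := (y.val.1 - 1, y.val.2 - y.val.1 - 1)
  left_inv x := by
    obtain ⟨a,b⟩ := x
    refine Prod.ext ?_ ?_ <;> dsimp <;> omega
  right_inv y := by
    obtain ⟨⟨m,n⟩,h1,h2⟩ := y
    apply Subtype.ext
    refine Prod.ext ?_ ?_ <;> dsimp <;> omega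

lemma L2 : ∑' p : ℕ×ℕ, Gg p
    = ∑' p : {p : ℕ × ℕ // 0 < p.1 ∧ p.1 < p.2}, 1 / ((p.1.1 : ℝ) * (p.1.2 : ℝ) ^ 2) := by
  rw [← eS.tsum_eq (fun p : {p : ℕ × ℕ // 0 < p.1 ∧ p.1 < p.2} =>
    1 / ((p.1.1 : ℝ) * (p.1.2 : ℝ) ^ 2))]
  refine tsum_congr fun x => ?_
  obtain ⟨a,b⟩ := x
  show Gg (a,b) = 1 / (((a+1:ℕ):ℝ) * ((a+b+2:ℕ):ℝ)^2)
  unfold Gg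
  push_cast
  ring_nf

lemma rowI (n : ℕ) : ∑' m, Ii (m, n) = ∑ m ∈ Finset.range n, Ii (m,n) := by
  refine tsum_eq_sum fun m hm => ?_
  unfold Ii
  rw [if_neg]
  rintro ⟨h1, h2⟩
  exact hm (Finset.mem_range.2 h2)

lemma cEq (j : ℕ) : ∑' m, Ii (m, j+1) = Hh j / ((j:ℝ)+1)^2 := by
  rw [rowI, Finset.sum_range_succ']
  have h0 : Ii (0, j+1) = 0 := by
    unfold Ii
    rw [if_neg]
    rintro ⟨h1, _⟩
    exact absurd h1 (lt_irrefl 0)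
  rw [h0, add_zero]
  have hpt : ∀ i ∈ Finset.range j, Ii (i+1, j+1) = (1/((i:ℝ)+1)) * (1/((j:ℝ)+1)^2) := by
    intro i hi
    unfold Ii
    rw [if_pos ⟨Nat.succ_pos i, by have := Finset.mem_range.1 hi; omega⟩]
    push_cast
    rw [div_mul_div_comm, one_mul]
  rw [Finset.sum_congr rfl hpt, ← Finset.sum_mul]
  rw [show (∑ i ∈ Finset.range j, 1/((i:ℝ)+1)) = Hh j from rfl]
  rw [mul_one_div]

lemma S3 : Summable (fun k : ℕ => 1/((k:ℝ)+1)^3) := by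
  have h := (summable_nat_add_iff 1).2 (Real.summable_one_div_nat_pow.2 (by norm_num : 1 < 3))
  refine h.congr fun n => ?_
  push_cast
  ring

/-- Euler's identity `ζ(3) = ζ(1,2)`:
`∑_{k ≥ 1} 1/k³ = ∑_{0 < j < k} 1/(j · k²)`. -/
theorem euler_zeta_three :
    (∑' k : ℕ, 1 / ((k : ℝ) + 1) ^ 3) =
      ∑' p : {p : ℕ × ℕ // 0 < p.1 ∧ p.1 < p.2},
        1 / ((p.1.1 : ℝ) * (p.1.2 : ℝ) ^ 2) := by
  have SK : Summable (fun q : ℕ×ℕ => Ii q.swap) := by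
    have h := ((Equiv.prodComm ℕ ℕ).summable_iff (f := Ii)).2 SI
    exact h.congr fun q => rfl
  have hZZ1 : ∑' p : ℕ×ℕ, Gg p = ∑' p : ℕ×ℕ, Ii p := by
    set g : ℕ×ℕ → ℕ×ℕ := fun x => (x.1+1, x.1+x.2+2) with hg
    have hinj : Function.Injective g := by
      rintro ⟨a,b⟩ ⟨c,d⟩ h
      rw [hg, Prod.ext_iff] at h
      obtain ⟨h1, h2⟩ := h
      refine Prod.ext ?_ ?_ <;> dsimp at * <;> omega
    have hsupp : Function.support Ii ⊆ Set.range g := by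
      intro p hp
      have hcond : 0 < p.1 ∧ p.1 < p.2 := by
        by_contra hc
        apply hp
        unfold Ii
        rw [if_neg hc]
      exact ⟨(p.1 - 1, p.2 - p.1 - 1), by
        rw [hg]
        refine Prod.ext ?_ ?_ <;> (dsimp; omega)⟩
    rw [← hinj.tsum_eq hsupp]
    refine tsum_congr fun x => ?_
    obtain ⟨a,b⟩ := x
    show Gg (a,b) = Ii (a+1, a+b+2)
    unfold Ii Gg
    rw [if_pos ⟨Nat.succ_pos a, by omega⟩]
    push_cast
    ring_nf
  have hZZ2 : ∑' p : ℕ×ℕ, Ii p = ∑' n : ℕ, ∑' m : ℕ, Ii (m, n) := by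
    have e := (Equiv.prodComm ℕ ℕ).tsum_eq Ii
    rw [← e]
    simp only [Equiv.prodComm_apply]
    rw [Summable.tsum_prod' SK (fun n => SK.prod_factor n)]
    rfl
  have Sc : Summable (fun n : ℕ => ∑' m : ℕ, Ii (m,n)) :=
    ((summable_prod_of_nonneg (fun q => Ii_nonneg q.swap)).1 SK).2
  have hZZ3 : ∑' n : ℕ, ∑' m : ℕ, Ii (m,n) = ∑' j : ℕ, Hh j/((j:ℝ)+1)^2 := by
    rw [Summable.tsum_eq_zero_add Sc]
    have c0 : ∑' m : ℕ, Ii (m, 0) = 0 := by rw [rowI]; simp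
    rw [c0, zero_add]
    exact tsum_congr cEq
  have Sc' : Summable (fun j : ℕ => Hh j/((j:ℝ)+1)^2) := by
    refine SrowF.of_nonneg_of_le (fun j => div_nonneg (Hh_nonneg j) (by positivity)) fun j => ?_
    have h1 : Hh j ≤ Hh (j+1) := by
      rw [Hh_succ]
      have : (0:ℝ) < 1/((j:ℝ)+1) := by positivity
      linarith
    gcongr
  have hmain1 : ∑' p : ℕ×ℕ, Ff p
      = (∑' k : ℕ, 1 / ((k:ℝ)+1)^3) + ∑' j : ℕ, Hh j/((j:ℝ)+1)^2 := by
    rw [L3, ← Summable.tsum_add S3 Sc']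
    refine tsum_congr fun j => ?_
    rw [Hh_succ]
    have hj : ((j:ℝ)+1) ≠ 0 := by positivity
    field_simp
    ring
  have hfin : ∑' j : ℕ, Hh j/((j:ℝ)+1)^2 = ∑' p : ℕ×ℕ, Gg p :=
    (hZZ1.trans (hZZ2.trans hZZ3)).symm
  linarith [hmain1, hfin, L1, L2]
end

section
/- The identity ζ(2,3) = −(11/2) ζ(5) + 3 ζ(3) ζ(2) holds, i.e. ∑_{0<j<k} 1/(j² k³) = −(11/2) ∑_{k≥1} 1/k⁵ + 3 (∑_{k≥1} 1/k³)(∑_{k≥1} 1/k²). -/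
open Filter Topology Finset Function Set

set_option maxHeartbeats 1000000

namespace ZetaTT

noncomputable def z (p : ℕ) : ℝ := ∑' k : ℕ, 1 / ((k : ℝ) + 1) ^ p

noncomputable def uf (a b c : ℕ) (q : ℕ × ℕ) : ℝ :=
  1 / (((q.1 : ℝ) + 1) ^ a * ((q.2 : ℝ) + 1) ^ b * ((q.1 : ℝ) + (q.2 : ℝ) + 2) ^ c)

noncomputable def U (a b c : ℕ) : ℝ := ∑' q : ℕ × ℕ, uf a b c q

lemma summable_z {p : ℕ} (hp : 2 ≤ p) : Summable (fun k : ℕ => 1 / ((k : ℝ) + 1) ^ p) := by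
  have h : Summable (fun n : ℕ => 1 / (n : ℝ) ^ p) :=
    Real.summable_one_div_nat_pow.2 (by omega)
  have h2 := h.comp_injective (add_left_injective 1)
  refine h2.congr fun k => ?_
  simp only [Function.comp_apply]
  push_cast
  ring

lemma summable_base :
    Summable (fun q : ℕ × ℕ => (1 / ((q.1 : ℝ) + 1) ^ 2) * (1 / ((q.2 : ℝ) + 1) ^ 2)) :=
  by
  have h := summable_z (p := 2) le_rfl
  have h0 : (0:ℕ→ℝ) ≤ (fun k : ℕ => 1 / ((k : ℝ) + 1) ^ 2) := fun x => by positivity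
  exact Summable.mul_of_nonneg h h h0 h0

lemma key_ineq {a b c : ℕ} (h : 2 - a + (2 - b) ≤ c) {x y : ℝ} (hx : 1 ≤ x) (hy : 1 ≤ y) :
    x ^ 2 * y ^ 2 ≤ x ^ a * y ^ b * (x + y) ^ c := by
  have hx0 : (0:ℝ) < x := lt_of_lt_of_le one_pos hx
  have hy0 : (0:ℝ) < y := lt_of_lt_of_le one_pos hy
  have hxy : (1:ℝ) ≤ x + y := by linarith
  calc x ^ 2 * y ^ 2 ≤ x ^ (a + (2 - a)) * y ^ (b + (2 - b)) :=
        mul_le_mul (pow_le_pow_right₀ hx (by omega)) (pow_le_pow_right₀ hy (by omega))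
          (by positivity) (by positivity)
    _ = (x ^ a * y ^ b) * (x ^ (2 - a) * y ^ (2 - b)) := by rw [pow_add, pow_add]; ring
    _ ≤ (x ^ a * y ^ b) * ((x + y) ^ (2 - a) * (x + y) ^ (2 - b)) := by
        refine mul_le_mul_of_nonneg_left ?_ (by positivity)
        exact mul_le_mul (pow_le_pow_left₀ (by positivity) (by linarith) _)
          (pow_le_pow_left₀ (by positivity) (by linarith) _) (by positivity) (by positivity)
    _ = (x ^ a * y ^ b) * (x + y) ^ (2 - a + (2 - b)) := by rw [pow_add]
    _ ≤ (x ^ a * y ^ b) * (x + y) ^ c :=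
        mul_le_mul_of_nonneg_left (pow_le_pow_right₀ hxy h) (by positivity)

lemma summable_U {a b c : ℕ} (h : 2 - a + (2 - b) ≤ c) : Summable (uf a b c) := by
  refine Summable.of_nonneg_of_le (fun q => by unfold uf; positivity) (fun q => ?_) summable_base
  have h0a : (0:ℝ) ≤ (q.1 : ℝ) := Nat.cast_nonneg _
  have h0b : (0:ℝ) ≤ (q.2 : ℝ) := Nat.cast_nonneg _
  have h1 : (1:ℝ) ≤ (q.1 : ℝ) + 1 := by linarith
  have h2 : (1:ℝ) ≤ (q.2 : ℝ) + 1 := by linarith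
  have hxy : (q.1 : ℝ) + (q.2 : ℝ) + 2 = ((q.1 : ℝ) + 1) + ((q.2 : ℝ) + 1) := by ring
  unfold uf
  rw [hxy, div_mul_div_comm, one_mul]
  exact one_div_le_one_div_of_le (by positivity) (key_ineq h h1 h2)

lemma U_swap (a b c : ℕ) : U a b c = U b a c := by
  rw [U, U, ← Equiv.tsum_eq (Equiv.prodComm ℕ ℕ) (uf b a c)]
  refine tsum_congr fun q => ?_
  unfold uf
  simp only [Equiv.prodComm_apply, Prod.snd_swap, Prod.fst_swap]
  ring

lemma U_step {a b c : ℕ} (h1 : 2 - (a+1) + (2 - b) ≤ c + 1) (h2 : 2 - a + (2 - (b+1)) ≤ c + 1) :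
    U (a+1) (b+1) c = U (a+1) b (c+1) + U a (b+1) (c+1) := by
  rw [U, U, U, ← Summable.tsum_add (summable_U h1) (summable_U h2)]
  refine tsum_congr fun q => ?_
  unfold uf
  have hx : (0:ℝ) < (q.1:ℝ) + 1 := by positivity
  have hy : (0:ℝ) < (q.2:ℝ) + 1 := by positivity
  have key : (q.1:ℝ) + (q.2:ℝ) + 2 = ((q.1:ℝ)+1) + ((q.2:ℝ)+1) := by ring
  have hxa : ((q.1:ℝ) + 1) ^ a ≠ 0 := pow_ne_zero _ hx.ne'
  have hyb : ((q.2:ℝ) + 1) ^ b ≠ 0 := pow_ne_zero _ hy.ne'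
  have hnc : (((q.1:ℝ)+1) + ((q.2:ℝ)+1)) ^ c ≠ 0 := pow_ne_zero _ (by positivity)
  rw [key, pow_succ, pow_succ, pow_succ]
  field_simp
  ring

lemma prod23 : z 2 * z 3 = U 2 3 0 := by
  have hs : Summable (fun q : ℕ × ℕ => (1 / ((q.1:ℝ) + 1) ^ 2) * (1 / ((q.2:ℝ) + 1) ^ 3)) := by
    refine (summable_U (a := 2) (b := 3) (c := 0) (by norm_num)).congr fun q => ?_
    unfold uf
    rw [pow_zero, mul_one, div_mul_div_comm, one_mul]
  rw [z, z, U, Summable.tsum_mul_tsum (summable_z (by norm_num)) (summable_z (by norm_num)) hs]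
  refine tsum_congr fun q => ?_
  unfold uf
  rw [pow_zero, mul_one, div_mul_div_comm, one_mul]

lemma split230 : U 2 3 0 = U 2 0 3 + U 0 3 2 + z 5 := by
  classical
  have hG : Summable (uf 2 3 0) := summable_U (by norm_num)
  have hdec : ∀ q : ℕ × ℕ, uf 2 3 0 q =
      ({q : ℕ×ℕ | q.1 < q.2}).indicator (uf 2 3 0) q
      + ({q : ℕ×ℕ | q.2 < q.1}).indicator (uf 2 3 0) q
      + ({q : ℕ×ℕ | q.1 = q.2}).indicator (uf 2 3 0) q := by
    intro q
    rcases lt_trichotomy q.1 q.2 with h|h|h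
    · rw [Set.indicator_of_mem (show q ∈ {q : ℕ×ℕ | q.1 < q.2} from h),
        Set.indicator_of_notMem (show q ∉ {q : ℕ×ℕ | q.2 < q.1} by simp; omega),
        Set.indicator_of_notMem (show q ∉ {q : ℕ×ℕ | q.1 = q.2} by simp; omega)]
      ring
    · rw [Set.indicator_of_notMem (show q ∉ {q : ℕ×ℕ | q.1 < q.2} by simp; omega),
        Set.indicator_of_notMem (show q ∉ {q : ℕ×ℕ | q.2 < q.1} by simp; omega),
        Set.indicator_of_mem (show q ∈ {q : ℕ×ℕ | q.1 = q.2} from h)]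
      ring
    · rw [Set.indicator_of_notMem (show q ∉ {q : ℕ×ℕ | q.1 < q.2} by simp; omega),
        Set.indicator_of_mem (show q ∈ {q : ℕ×ℕ | q.2 < q.1} from h),
        Set.indicator_of_notMem (show q ∉ {q : ℕ×ℕ | q.1 = q.2} by simp; omega)]
      ring
  rw [U, tsum_congr hdec,
    Summable.tsum_add ((hG.indicator _).add (hG.indicator _)) (hG.indicator _),
    Summable.tsum_add (hG.indicator _) (hG.indicator _)]
  have part1 : ∑' q : ℕ×ℕ, ({q : ℕ×ℕ | q.1 < q.2}).indicator (uf 2 3 0) q = U 2 0 3 := by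
    have inj1 : Injective (fun p : ℕ×ℕ => (p.1, p.1 + p.2 + 1)) := by
      intro p q h
      simp only [Prod.mk.injEq] at h
      exact Prod.ext h.1 (by omega)
    have hsupp1 : support (({q : ℕ×ℕ | q.1 < q.2}).indicator (uf 2 3 0)) ⊆
        Set.range (fun p : ℕ×ℕ => (p.1, p.1 + p.2 + 1)) := by
      intro q hq
      have : q ∈ {q : ℕ×ℕ | q.1 < q.2} := Set.support_indicator_subset hq
      exact ⟨(q.1, q.2 - q.1 - 1), Prod.ext rfl (by simp at this ⊢; omega)⟩
    rw [← inj1.tsum_eq hsupp1, U]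
    refine tsum_congr fun p => ?_
    rw [Set.indicator_of_mem (show ((p.1, p.1+p.2+1) : ℕ×ℕ) ∈ {q : ℕ×ℕ | q.1 < q.2} by simp)]
    unfold uf
    push_cast
    ring_nf
  have part2 : ∑' q : ℕ×ℕ, ({q : ℕ×ℕ | q.2 < q.1}).indicator (uf 2 3 0) q = U 0 3 2 := by
    have inj2 : Injective (fun p : ℕ×ℕ => (p.1 + p.2 + 1, p.2)) := by
      intro p q h
      simp only [Prod.mk.injEq] at h
      exact Prod.ext (by omega) h.2
    have hsupp2 : support (({q : ℕ×ℕ | q.2 < q.1}).indicator (uf 2 3 0)) ⊆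
        Set.range (fun p : ℕ×ℕ => (p.1 + p.2 + 1, p.2)) := by
      intro q hq
      have : q ∈ {q : ℕ×ℕ | q.2 < q.1} := Set.support_indicator_subset hq
      exact ⟨(q.1 - q.2 - 1, q.2), Prod.ext (by simp at this ⊢; omega) rfl⟩
    rw [← inj2.tsum_eq hsupp2, U]
    refine tsum_congr fun p => ?_
    rw [Set.indicator_of_mem (show ((p.1+p.2+1, p.2) : ℕ×ℕ) ∈ {q : ℕ×ℕ | q.2 < q.1} by simp)]
    unfold uf
    push_cast
    ring_nf
  have part3 : ∑' q : ℕ×ℕ, ({q : ℕ×ℕ | q.1 = q.2}).indicator (uf 2 3 0) q = z 5 := by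
    have inj3 : Injective (fun a : ℕ => ((a, a) : ℕ×ℕ)) := by
      intro p q h
      simpa using congrArg Prod.fst h
    have hsupp3 : support (({q : ℕ×ℕ | q.1 = q.2}).indicator (uf 2 3 0)) ⊆
        Set.range (fun a : ℕ => (a, a)) := by
      intro q hq
      have : q ∈ {q : ℕ×ℕ | q.1 = q.2} := Set.support_indicator_subset hq
      exact ⟨q.1, Prod.ext rfl (by simpa using this)⟩
    rw [← inj3.tsum_eq hsupp3, z]
    refine tsum_congr fun a => ?_
    rw [Set.indicator_of_mem (show ((a, a) : ℕ×ℕ) ∈ {q : ℕ×ℕ | q.1 = q.2} by simp)]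
    unfold uf
    rw [pow_zero, mul_one, ← pow_add]
  rw [part1, part2, part3]

lemma U113_eq : U 1 1 3 = 2 * U 1 0 4 := by
  have h := U_step (a:=0) (b:=0) (c:=3) (by norm_num) (by norm_num)
  rw [h, U_swap 0 1 4]; ring

lemma U122_eq : U 1 2 2 = U 1 1 3 + U 2 0 3 := by
  have h := U_step (a:=0) (b:=1) (c:=2) (by norm_num) (by norm_num)
  rw [h, U_swap 0 2 3]

lemma U212_eq : U 2 1 2 = U 2 0 3 + U 1 1 3 :=
  U_step (a:=1) (b:=0) (c:=2) (by norm_num) (by norm_num)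

lemma U131_eq : U 1 3 1 = U 1 2 2 + U 3 0 2 := by
  have h := U_step (a:=0) (b:=2) (c:=1) (by norm_num) (by norm_num)
  rw [h, U_swap 0 3 2]

lemma U221_eq : U 2 2 1 = U 2 1 2 + U 1 2 2 :=
  U_step (a:=1) (b:=1) (c:=1) (by norm_num) (by norm_num)

lemma U230_eq : U 2 3 0 = U 2 2 1 + U 1 3 1 :=
  U_step (a:=1) (b:=2) (c:=0) (by norm_num) (by norm_num)

lemma U311_eq : U 3 1 1 = U 3 0 2 + U 2 0 3 + 2 * U 1 0 4 := by
  have h := U_step (a:=2) (b:=0) (c:=1) (by norm_num) (by norm_num)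
  rw [h, U212_eq, U113_eq]; ring

lemma shuffle : z 2 * z 3 = 3 * U 2 0 3 + U 3 0 2 + 6 * U 1 0 4 := by
  rw [prod23, U230_eq, U221_eq, U131_eq, U122_eq, U212_eq, U113_eq]; ring

lemma stuffle : z 2 * z 3 = U 2 0 3 + U 3 0 2 + z 5 := by
  rw [prod23, split230, U_swap 0 3 2]

def eTarget : ℕ × ℕ ≃ {p : ℕ × ℕ // 0 < p.1 ∧ p.1 < p.2} where
  toFun q := ⟨(q.1 + 1, q.1 + q.2 + 2), by constructor <;> omega⟩
  invFun s := (s.1.1 - 1, s.1.2 - s.1.1 - 1)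
  left_inv q := by
    refine Prod.ext ?_ ?_ <;> simp <;> omega
  right_inv := by
    rintro ⟨⟨j, k⟩, h1, h2⟩
    refine Subtype.ext (Prod.ext ?_ ?_) <;> simp <;> omega

lemma target_eq :
    (∑' p : {p : ℕ × ℕ // 0 < p.1 ∧ p.1 < p.2}, 1 / ((p.1.1 : ℝ) ^ 2 * (p.1.2 : ℝ) ^ 3))
      = U 2 0 3 := by
  rw [← eTarget.tsum_eq, U]
  refine tsum_congr fun q => ?_
  simp only [eTarget, Equiv.coe_fn_mk]
  unfold uf
  push_cast
  ring

noncomputable def Hh (n : ℕ) : ℝ := ∑ i ∈ range n, 1/((i:ℝ)+1)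

noncomputable def aN (N : ℕ) : ℝ :=
  ∑ j ∈ range N, 1/(((j:ℝ)+1)^3 * ((N:ℝ)-(j:ℝ)) * ((N:ℝ)+1))

noncomputable def bN (N : ℕ) : ℝ :=
  ∑ j ∈ range N, 1/(((j:ℝ)+1) * ((N:ℝ)-(j:ℝ)) * ((N:ℝ)+1)^3)

noncomputable def cN (N : ℕ) : ℝ := Hh N/((N:ℝ)+1)^4

noncomputable def RN (N : ℕ) : ℝ := ∑ k ∈ range N, (Hh N - Hh (N-1-k))/((k:ℝ)+1)^4

lemma Hh_succ (n : ℕ) : Hh (n+1) = Hh n + 1/((n:ℝ)+1) := sum_range_succ _ n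

lemma cast_NK {N k : ℕ} (hk : k < N) : ((N - 1 - k : ℕ):ℝ) + 1 = (N:ℝ) - (k:ℝ) := by
  have h1 : (N - 1 - k : ℕ) = N - (k+1) := by omega
  rw [h1, Nat.cast_sub (by omega)]
  push_cast
  ring

lemma R_succ (N : ℕ) : RN (N+1) = RN N + cN N + 1/((N:ℝ)+1)^5
    + ∑ k ∈ range N, (1/((N:ℝ)+1) - 1/((N:ℝ)-(k:ℝ)))/((k:ℝ)+1)^4 := by
  rw [RN, sum_range_succ]
  have hlast : (Hh (N+1) - Hh (N+1-1-N))/((N:ℝ)+1)^4 = cN N + 1/((N:ℝ)+1)^5 := by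
    have h0 : N+1-1-N = 0 := by omega
    rw [h0, Hh_succ, cN]
    simp only [Hh, range_zero, sum_empty, sub_zero]
    have hN1 : ((N:ℝ)+1) ≠ 0 := by positivity
    field_simp
  have hmain : ∑ k ∈ range N, (Hh (N+1) - Hh (N+1-1-k))/((k:ℝ)+1)^4
      = RN N + ∑ k ∈ range N, (1/((N:ℝ)+1) - 1/((N:ℝ)-(k:ℝ)))/((k:ℝ)+1)^4 := by
    rw [RN, ← sum_add_distrib]
    refine sum_congr rfl fun k hk => ?_
    have hkN : k < N := mem_range.mp hk
    have h2 : N + 1 - 1 - k = (N - 1 - k) + 1 := by omega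
    rw [h2, Hh_succ, Hh_succ, cast_NK hkN]
    ring
  rw [hmain, hlast]
  ring

lemma keyN (N : ℕ) : aN N - bN N + 2*cN N
    + (∑ k ∈ range N, (1/((N:ℝ)+1) - 1/((N:ℝ)-(k:ℝ)))/((k:ℝ)+1)^4) = 0 := by
  have combine : aN N - bN N + 2*cN N
      + (∑ k ∈ range N, (1/((N:ℝ)+1) - 1/((N:ℝ)-(k:ℝ)))/((k:ℝ)+1)^4)
      = ∑ j ∈ range N,
        (1/(((j:ℝ)+1)^3 * ((N:ℝ)-(j:ℝ)) * ((N:ℝ)+1))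
          - 1/(((j:ℝ)+1) * ((N:ℝ)-(j:ℝ)) * ((N:ℝ)+1)^3)
          + 2 * ((1/((j:ℝ)+1))/((N:ℝ)+1)^4)
          + (1/((N:ℝ)+1) - 1/((N:ℝ)-(j:ℝ)))/((j:ℝ)+1)^4) := by
    rw [aN, bN, cN, Hh, sum_div, mul_sum, ← sum_sub_distrib, ← sum_add_distrib,
      ← sum_add_distrib]
  have hw : ∀ j ∈ range N,
      (1/(((j:ℝ)+1)^3 * ((N:ℝ)-(j:ℝ)) * ((N:ℝ)+1))
        - 1/(((j:ℝ)+1) * ((N:ℝ)-(j:ℝ)) * ((N:ℝ)+1)^3)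
        + 2 * ((1/((j:ℝ)+1))/((N:ℝ)+1)^4)
        + (1/((N:ℝ)+1) - 1/((N:ℝ)-(j:ℝ)))/((j:ℝ)+1)^4)
      = (1/((j:ℝ)+1))/((N:ℝ)+1)^4 - (1/((N:ℝ)-(j:ℝ)))/((N:ℝ)+1)^4 := by
    intro j hj
    have hjN : j < N := mem_range.mp hj
    have hj1 : ((j:ℝ)+1) ≠ 0 := by positivity
    have hNj : (N:ℝ) - (j:ℝ) ≠ 0 := by
      have : (j:ℝ) < (N:ℝ) := by exact_mod_cast hjN
      intro h; linarith
    have hN1 : ((N:ℝ)+1) ≠ 0 := by positivity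
    field_simp
    ring
  rw [combine, sum_congr rfl hw, sum_sub_distrib]
  have hrefl : ∑ j ∈ range N, (1/((j:ℝ)+1))/((N:ℝ)+1)^4
      = ∑ j ∈ range N, (1/((N:ℝ)-(j:ℝ)))/((N:ℝ)+1)^4 := by
    rw [← sum_range_reflect (fun j => (1/((j:ℝ)+1))/((N:ℝ)+1)^4) N]
    refine sum_congr rfl fun j hj => ?_
    rw [cast_NK (mem_range.mp hj)]
  rw [hrefl, sub_self]

lemma EN (N : ℕ) : ∑ m ∈ range N, 1/((m:ℝ)+1)^5
    = (∑ m ∈ range N, aN m) - (∑ m ∈ range N, bN m) + (∑ m ∈ range N, cN m) + RN N := by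
  induction N with
  | zero => simp [RN]
  | succ N ih =>
    rw [sum_range_succ, sum_range_succ, sum_range_succ, sum_range_succ, R_succ, ih]
    have := keyN N
    linarith

def eSig : (Σ _m : ℕ, Fin (_m+1)) ≃ ℕ × ℕ where
  toFun x := (x.2.1, x.1 - x.2.1)
  invFun q := ⟨q.1 + q.2, ⟨q.1, by omega⟩⟩
  left_inv := by
    rintro ⟨m, ⟨a, ha⟩⟩
    dsimp only
    have hm : a + (m - a) = m := by omega
    refine Sigma.ext hm ?_
    rw [Fin.heq_ext_iff (by simp [hm])]
  right_inv q := by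
    refine Prod.ext rfl ?_
    show q.1 + q.2 - q.1 = q.2
    omega

lemma hasSum_diag (f : ℕ × ℕ → ℝ) (hf : Summable f) :
    HasSum (fun m => ∑ a ∈ range (m+1), f (a, m - a)) (∑' q, f q) := by
  have h1 : HasSum (f ∘ eSig) (∑' q, f q) := (eSig.hasSum_iff).2 hf.hasSum
  refine h1.sigma fun m => ?_
  rw [← Fin.sum_univ_eq_sum_range (fun a => f (a, m - a)) (m+1)]
  exact hasSum_fintype _

lemma tendsto_tri (f : ℕ × ℕ → ℝ) (hf : Summable f) :
    Tendsto (fun N => ∑ m ∈ range N, ∑ j ∈ range m, f (j, m - 1 - j)) atTop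
      (𝓝 (∑' q, f q)) := by
  have h := (hasSum_diag f hf).tendsto_sum_nat
  rw [← tendsto_add_atTop_iff_nat 1]
  refine h.congr fun N => ?_
  rw [sum_range_succ']
  simp only [range_zero, sum_empty, add_zero]
  refine (sum_congr rfl fun m _ => ?_)
  refine sum_congr rfl fun j _ => ?_
  congr 1

lemma tendsto_A : Tendsto (fun N => ∑ m ∈ range N, aN m) atTop (𝓝 (U 3 1 1)) := by
  have h := tendsto_tri (uf 3 1 1) (summable_U (by norm_num))
  rw [U]
  refine h.congr fun N => sum_congr rfl fun m _ => ?_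
  rw [aN]
  refine sum_congr rfl fun j hj => ?_
  have hjm := mem_range.mp hj
  have h2 : ((m - 1 - j : ℕ):ℝ) = (m:ℝ) - (j:ℝ) - 1 := by linarith [cast_NK hjm]
  unfold uf
  simp only [h2]
  ring_nf

lemma tendsto_B : Tendsto (fun N => ∑ m ∈ range N, bN m) atTop (𝓝 (U 1 1 3)) := by
  have h := tendsto_tri (uf 1 1 3) (summable_U (by norm_num))
  rw [U]
  refine h.congr fun N => sum_congr rfl fun m _ => ?_
  rw [bN]
  refine sum_congr rfl fun j hj => ?_
  have hjm := mem_range.mp hj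
  have h2 : ((m - 1 - j : ℕ):ℝ) = (m:ℝ) - (j:ℝ) - 1 := by linarith [cast_NK hjm]
  unfold uf
  simp only [h2]
  ring_nf

lemma tendsto_C : Tendsto (fun N => ∑ m ∈ range N, cN m) atTop (𝓝 (U 1 0 4)) := by
  have h := tendsto_tri (uf 1 0 4) (summable_U (by norm_num))
  rw [U]
  refine h.congr fun N => sum_congr rfl fun m _ => ?_
  rw [cN, Hh, sum_div]
  refine sum_congr rfl fun j hj => ?_
  have hjm := mem_range.mp hj
  have h2 : ((m - 1 - j : ℕ):ℝ) = (m:ℝ) - (j:ℝ) - 1 := by linarith [cast_NK hjm]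
  unfold uf
  simp only [h2, pow_one, pow_zero, mul_one]
  rw [show (j:ℝ) + ((m:ℝ) - (j:ℝ) - 1) + 2 = (m:ℝ) + 1 by ring, div_div]

lemma tendsto_S5 :
    Tendsto (fun N => ∑ m ∈ range N, 1/((m:ℝ)+1)^5) atTop (𝓝 (z 5)) := by
  rw [z]
  exact (summable_z (by norm_num)).hasSum.tendsto_sum_nat

lemma Hh_nonneg (n : ℕ) : 0 ≤ Hh n := by
  rw [Hh]; exact sum_nonneg fun i _ => by positivity

lemma Hh_mono : Monotone Hh := fun a b hab =>
  sum_le_sum_of_subset_of_nonneg (range_subset_range.mpr hab) fun i _ _ => by positivity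

lemma Hh_le (n : ℕ) : Hh n ≤ (n:ℝ) := by
  rw [Hh]
  calc ∑ i ∈ range n, 1/((i:ℝ)+1) ≤ ∑ _i ∈ range n, (1:ℝ) := by
        refine sum_le_sum fun i _ => ?_
        rw [div_le_one (by positivity)]
        have : (0:ℝ) ≤ (i:ℝ) := Nat.cast_nonneg i
        linarith
    _ = (n:ℝ) := by simp

lemma Hh_split {N k : ℕ} (h : k < N) :
    Hh N = Hh (N-1-k) + ∑ i ∈ Finset.Ico (N-1-k) N, 1/((i:ℝ)+1) := by
  rw [Hh, Hh, range_eq_Ico, range_eq_Ico]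
  exact (Finset.sum_Ico_consecutive (fun i : ℕ => 1/((i:ℝ)+1)) (Nat.zero_le _) (by omega : N - 1 - k ≤ N)).symm

lemma Hh_sub_le {N k : ℕ} (h : k < N) : Hh N - Hh (N-1-k) ≤ Hh (k+1) := by
  rw [Hh_split h]
  have : ∑ i ∈ Finset.Ico (N-1-k) N, 1/((i:ℝ)+1) ≤ Hh (k+1) := by
    rw [sum_Ico_eq_sum_range, show N - (N-1-k) = k+1 by omega, Hh]
    refine sum_le_sum fun t _ => ?_
    apply one_div_le_one_div_of_le (by positivity)
    have : (t:ℝ) ≤ ((N - 1 - k + t : ℕ):ℝ) := by exact_mod_cast Nat.le_add_left t (N-1-k)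
    linarith
  linarith

lemma Hh_sub_le' {N k : ℕ} (h : k < N) :
    Hh N - Hh (N-1-k) ≤ ((k:ℝ)+1)/((N:ℝ)-(k:ℝ)) := by
  have hNk : (0:ℝ) < (N:ℝ) - (k:ℝ) := by
    have : (k:ℝ) < (N:ℝ) := by exact_mod_cast h
    linarith
  rw [Hh_split h]
  have hb : ∑ i ∈ Finset.Ico (N-1-k) N, 1/((i:ℝ)+1)
      ≤ ∑ _i ∈ Finset.Ico (N-1-k) N, 1/((N:ℝ)-(k:ℝ)) := by
    refine sum_le_sum fun i hi => ?_
    obtain ⟨h1, _⟩ := Finset.mem_Ico.mp hi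
    apply one_div_le_one_div_of_le hNk
    have hNi : (N - k : ℕ) ≤ i + 1 := by omega
    have := (Nat.cast_le (α := ℝ)).mpr hNi
    rw [Nat.cast_sub (by omega : k ≤ N)] at this
    push_cast at this
    linarith
  have hc : ∑ _i ∈ Finset.Ico (N-1-k) N, 1/((N:ℝ)-(k:ℝ)) = ((k:ℝ)+1)/((N:ℝ)-(k:ℝ)) := by
    rw [sum_const, Nat.card_Ico, show N - (N-1-k) = k+1 by omega, nsmul_eq_mul]
    push_cast
    ring
  rw [hc] at hb
  linarith

noncomputable def FF (N k : ℕ) : ℝ :=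
  if k < N then (Hh N - Hh (N-1-k))/((k:ℝ)+1)^4 else 0

lemma FF_nonneg (N k : ℕ) : 0 ≤ FF N k := by
  rw [FF]
  split
  · apply div_nonneg _ (by positivity)
    have := Hh_mono (show N - 1 - k ≤ N by omega)
    linarith
  · exact le_refl 0

lemma RN_eq (N : ℕ) : (∑' k, FF N k) = RN N := by
  have h1 : ∀ b ∉ range N, FF N b = 0 := fun b hb => by
    rw [FF, if_neg (fun hlt => hb (mem_range.mpr hlt))]
  rw [tsum_eq_sum h1, RN]
  exact sum_congr rfl fun k hk => by rw [FF, if_pos (mem_range.mp hk)]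

lemma tendsto_R : Tendsto RN atTop (𝓝 0) := by
  have hbd : Summable (fun k : ℕ => Hh (k+1)/((k:ℝ)+1)^4) := by
    refine Summable.of_nonneg_of_le
      (fun k => div_nonneg (Hh_nonneg (k+1)) (by positivity))
      (fun k => ?_) (summable_z (p := 3) (by norm_num))
    rw [div_le_div_iff₀ (by positivity) (by positivity)]
    calc Hh (k+1) * ((k:ℝ)+1)^3 ≤ ((k:ℝ)+1) * ((k:ℝ)+1)^3 := by
          refine mul_le_mul_of_nonneg_right ?_ (by positivity)
          have := Hh_le (k+1); push_cast at this; linarith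
      _ = 1 * ((k:ℝ)+1)^4 := by ring
  have hpt : ∀ k, Tendsto (fun N => FF N k) atTop (𝓝 0) := by
    intro k
    have hden : Tendsto (fun N : ℕ => (N:ℝ) - (k:ℝ)) atTop atTop := by
      have := tendsto_atTop_add_const_right atTop (-(k:ℝ)) tendsto_natCast_atTop_atTop
      exact this.congr fun n => by ring
    have hlim : Tendsto (fun N : ℕ => ((k:ℝ)+1)/((N:ℝ)-(k:ℝ))) atTop (𝓝 0) :=
      Tendsto.const_div_atTop hden _
    refine squeeze_zero' (Eventually.of_forall fun N => FF_nonneg N k) ?_ hlim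
    filter_upwards [eventually_ge_atTop (k+1)] with N hN
    have hkN : k < N := by omega
    rw [FF, if_pos hkN]
    have hnn : 0 ≤ Hh N - Hh (N-1-k) := by
      have := Hh_mono (show N - 1 - k ≤ N by omega); linarith
    have hk1 : (1:ℝ) ≤ (k:ℝ)+1 := by
      have := Nat.cast_nonneg (α := ℝ) k
      linarith
    calc (Hh N - Hh (N-1-k))/((k:ℝ)+1)^4 ≤ Hh N - Hh (N-1-k) :=
          div_le_self hnn (one_le_pow₀ hk1)
      _ ≤ ((k:ℝ)+1)/((N:ℝ)-(k:ℝ)) := Hh_sub_le' hkN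
  have hb : ∀ N, ∀ k, ‖FF N k‖ ≤ Hh (k+1)/((k:ℝ)+1)^4 := by
    intro N k
    rw [Real.norm_eq_abs, abs_of_nonneg (FF_nonneg N k), FF]
    split
    · next hkN => exact (div_le_div_iff_of_pos_right (by positivity)).mpr (Hh_sub_le hkN)
    · exact div_nonneg (Hh_nonneg (k+1)) (by positivity)
  have h := tendsto_tsum_of_dominated_convergence (𝓕 := (atTop : Filter ℕ))
    (g := fun _ : ℕ => (0:ℝ)) hbd hpt (Eventually.of_forall hb)
  rw [tsum_zero] at h
  exact h.congr fun N => RN_eq N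

lemma sum_formula : z 5 = U 3 0 2 + U 2 0 3 + U 1 0 4 := by
  have h2 : Tendsto (fun N => ∑ m ∈ range N, 1/((m:ℝ)+1)^5) atTop
      (𝓝 (U 3 1 1 - U 1 1 3 + U 1 0 4 + 0)) := by
    have h := ((tendsto_A.sub tendsto_B).add tendsto_C).add tendsto_R
    exact h.congr fun N => (EN N).symm
  have h3 := tendsto_nhds_unique tendsto_S5 h2
  rw [U311_eq, U113_eq] at h3
  linarith

end ZetaTT

/-- The identity `ζ(2,3) = -(11/2) ζ(5) + 3 ζ(3) ζ(2)`. -/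
theorem zeta_two_three :
    (∑' p : {p : ℕ × ℕ // 0 < p.1 ∧ p.1 < p.2}, 1 / ((p.1.1 : ℝ) ^ 2 * (p.1.2 : ℝ) ^ 3)) =
      -(11 / 2) * (∑' k : ℕ, 1 / ((k : ℝ) + 1) ^ 5) +
        3 * (∑' k : ℕ, 1 / ((k : ℝ) + 1) ^ 3) * (∑' k : ℕ, 1 / ((k : ℝ) + 1) ^ 2) := by
  have h2 := ZetaTT.stuffle
  have h3 := ZetaTT.shuffle
  have h4 := ZetaTT.sum_formula
  rw [ZetaTT.target_eq]
  show ZetaTT.U 2 0 3 = -(11/2) * ZetaTT.z 5 + 3 * ZetaTT.z 3 * ZetaTT.z 2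
  rw [show (3:ℝ) * ZetaTT.z 3 * ZetaTT.z 2 = 3 * (ZetaTT.z 2 * ZetaTT.z 3) from by ring]
  linarith
end

section
/- The identity ζ(4,3) = −18 ζ(7) + 10 ζ(5) ζ(2) + (2/5) ζ(3) ζ(2)² holds, i.e. ∑_{0<j<k} 1/(j⁴ k³) = −18 ∑_{k≥1} 1/k⁷ + 10 (∑_{k≥1} 1/k⁵)(∑_{k≥1} 1/k²) + (2/5)(∑_{k≥1} 1/k³)(∑_{k≥1} 1/k²)². -/
open Finset

namespace ZetaFT

noncomputable section

def zf (s : ℕ) (k : ℕ) : ℝ := 1 / ((k : ℝ) + 1) ^ s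

def tf (a b : ℕ) (p : ℕ × ℕ) : ℝ :=
  1 / (((p.1 : ℝ) + (p.2 : ℝ) + 2) ^ a * ((p.1 : ℝ) + 1) ^ b)

def z (s : ℕ) : ℝ := ∑' k : ℕ, zf s k

def t (a b : ℕ) : ℝ := ∑' p : ℕ × ℕ, tf a b p

/-- summand of `D_c = ∑ 1/(x y (x+y)^c)`. -/
def df (c : ℕ) (p : ℕ × ℕ) : ℝ :=
  1 / (((p.1 : ℝ) + 1) * ((p.2 : ℝ) + 1) * ((p.1 : ℝ) + (p.2 : ℝ) + 2) ^ c)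

/-- summand of `R_c = ∑ 1/(x^c y (x+y))`. -/
def rf (c : ℕ) (p : ℕ × ℕ) : ℝ :=
  1 / (((p.1 : ℝ) + 1) ^ c * (((p.2 : ℝ) + 1) * ((p.1 : ℝ) + (p.2 : ℝ) + 2)))

lemma zf_nonneg (s k : ℕ) : 0 ≤ zf s k := by unfold zf; positivity

lemma tf_nonneg (a b : ℕ) (p : ℕ × ℕ) : 0 ≤ tf a b p := by unfold tf; positivity

lemma df_nonneg (c : ℕ) (p : ℕ × ℕ) : 0 ≤ df c p := by unfold df; positivity

lemma rf_nonneg (c : ℕ) (p : ℕ × ℕ) : 0 ≤ rf c p := by unfold rf; positivity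

lemma summable_zf {s : ℕ} (hs : 2 ≤ s) : Summable (zf s) := by
  have h1 : Summable (fun n : ℕ => 1 / (n : ℝ) ^ s) :=
    Real.summable_one_div_nat_pow.mpr (lt_of_lt_of_le one_lt_two hs)
  have h2 := (summable_nat_add_iff 1).mpr h1
  refine h2.congr fun k => ?_
  unfold zf
  push_cast
  ring_nf

lemma summable_pf {a b : ℕ} (ha : 2 ≤ a) (hb : 2 ≤ b) :
    Summable (fun p : ℕ × ℕ => zf a p.1 * zf b p.2) :=
  (summable_zf ha).mul_of_nonneg (summable_zf hb) (fun _ => zf_nonneg _ _)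
    (fun _ => zf_nonneg _ _)

lemma summable_tf2 {a b : ℕ} (ha : 2 ≤ a) (hb : 2 ≤ b) : Summable (tf a b) := by
  refine Summable.of_nonneg_of_le (fun p => tf_nonneg a b p) (fun p => ?_)
    (summable_pf hb ha)
  unfold tf zf
  rw [div_mul_div_comm, one_mul]
  apply one_div_le_one_div_of_le
  · positivity
  · rw [mul_comm (((p.1:ℝ)+1)^b)]
    have h1 : ((p.2:ℝ)+1)^a ≤ ((p.1:ℝ)+(p.2:ℝ)+2)^a := by
      apply pow_le_pow_left₀ (by positivity)
      linarith [Nat.cast_nonneg (α := ℝ) p.1]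
    exact mul_le_mul_of_nonneg_right h1 (by positivity)

lemma summable_tf1 {a : ℕ} (ha : 3 ≤ a) : Summable (tf a 1) := by
  obtain ⟨c, rfl⟩ : ∃ c, a = c + 1 := ⟨a - 1, by omega⟩
  refine Summable.of_nonneg_of_le (fun p => tf_nonneg _ 1 p) (fun p => ?_)
    (summable_tf2 (a := c) (b := 2) (by omega) le_rfl)
  unfold tf
  apply one_div_le_one_div_of_le
  · positivity
  · have hs : ((p.1:ℝ) + 1) ≤ ((p.1:ℝ) + (p.2:ℝ) + 2) := by
      linarith [Nat.cast_nonneg (α := ℝ) p.2]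
    calc ((p.1:ℝ) + (p.2:ℝ) + 2) ^ c * ((p.1:ℝ)+1)^2
        = (((p.1:ℝ) + (p.2:ℝ) + 2) ^ c * ((p.1:ℝ)+1)^1) * ((p.1:ℝ)+1) := by ring
      _ ≤ (((p.1:ℝ) + (p.2:ℝ) + 2) ^ c * ((p.1:ℝ)+1)^1) * ((p.1:ℝ)+(p.2:ℝ)+2) := by
          gcongr
      _ = ((p.1:ℝ) + (p.2:ℝ) + 2) ^ (c+1) * ((p.1:ℝ)+1)^1 := by
          rw [pow_succ]; ring

lemma summable_df {c : ℕ} (hc : 2 ≤ c) : Summable (df c) := by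
  refine Summable.of_nonneg_of_le (fun p => df_nonneg c p) (fun p => ?_)
    (summable_pf (le_refl 2) (le_refl 2))
  unfold df zf
  rw [div_mul_div_comm, one_mul]
  apply one_div_le_one_div_of_le
  · positivity
  · set x := ((p.1:ℝ)+1) with hx
    set y := ((p.2:ℝ)+1) with hy
    have hx0 : 0 < x := by positivity
    have hy0 : 0 < y := by positivity
    have hxy : x + y = (p.1:ℝ) + (p.2:ℝ) + 2 := by rw [hx, hy]; ring
    have h1 : x * y ≤ ((p.1:ℝ) + (p.2:ℝ) + 2) ^ 2 := by
      rw [← hxy]; nlinarith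
    have h2 : ((p.1:ℝ) + (p.2:ℝ) + 2) ^ 2 ≤ ((p.1:ℝ) + (p.2:ℝ) + 2) ^ c := by
      apply pow_le_pow_right₀ (by linarith [Nat.cast_nonneg (α := ℝ) p.1, Nat.cast_nonneg (α := ℝ) p.2]) hc
    calc x ^ 2 * y ^ 2 = (x*y) * (x*y) := by ring
      _ ≤ (x*y) * ((p.1:ℝ) + (p.2:ℝ) + 2) ^ 2 :=
          mul_le_mul_of_nonneg_left h1 (by positivity)
      _ ≤ (x*y) * ((p.1:ℝ) + (p.2:ℝ) + 2) ^ c :=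
          mul_le_mul_of_nonneg_left h2 (by positivity)
      _ = x * y * ((p.1:ℝ) + (p.2:ℝ) + 2) ^ c := by ring

lemma summable_rf {c : ℕ} (hc : 2 ≤ c) : Summable (rf c) := by
  refine Summable.of_nonneg_of_le (fun p => rf_nonneg c p) (fun p => ?_)
    (summable_pf hc (le_refl 2))
  unfold rf zf
  rw [div_mul_div_comm, one_mul]
  apply one_div_le_one_div_of_le
  · positivity
  · apply mul_le_mul_of_nonneg_left ?_ (by positivity)
    rw [pow_two]
    apply mul_le_mul_of_nonneg_left ?_ (by positivity)
    linarith [Nat.cast_nonneg (α := ℝ) p.1]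


lemma tsum_sum_type {α β : Type*} {f : α ⊕ β → ℝ} (hf : Summable f) :
    ∑' x, f x = (∑' a, f (Sum.inl a)) + ∑' b, f (Sum.inr b) := by
  have h1 : Summable (f ∘ (↑) : (Set.range (Sum.inl : α → α ⊕ β)) → ℝ) :=
    (hf.subtype _)
  have h2 : Summable (f ∘ (↑) : ((Set.range (Sum.inl : α → α ⊕ β))ᶜ : Set (α ⊕ β)) → ℝ) :=
    (hf.subtype _)
  rw [← Summable.tsum_add_tsum_compl (s := Set.range (Sum.inl : α → α ⊕ β)) h1 h2]
  congr 1
  · rw [tsum_range f Sum.inl_injective]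
  · rw [show ((Set.range (Sum.inl : α → α ⊕ β))ᶜ : Set (α ⊕ β)) = Set.range Sum.inr by
      rw [Set.compl_range_inl]]
    rw [tsum_range f Sum.inr_injective]

/-- three-way decomposition of `ℕ × ℕ` into above-diagonal, below-diagonal, diagonal. -/
def E : ((ℕ × ℕ) ⊕ (ℕ × ℕ)) ⊕ ℕ ≃ ℕ × ℕ where
  toFun x := match x with
    | .inl (.inl (j, k)) => (j + k + 1, j)
    | .inl (.inr (j, k)) => (j, j + k + 1)
    | .inr k => (k, k)
  invFun p :=
    if h : p.2 < p.1 then .inl (.inl (p.2, p.1 - p.2 - 1))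
    else if h' : p.1 < p.2 then .inl (.inr (p.1, p.2 - p.1 - 1))
    else .inr p.1
  left_inv x := by
    rcases x with (⟨j, k⟩ | ⟨j, k⟩) | k <;> simp only [] <;>
      [rw [dif_pos (by omega)]; rw [dif_neg (by omega), dif_pos (by omega)];
       rw [dif_neg (by omega), dif_neg (by omega)]] <;> simp <;> omega
  right_inv p := by
    rcases p with ⟨a, b⟩
    by_cases h : b < a
    · simp only [dif_pos h]; simp; omega
    · by_cases h' : a < b
      · simp only [dif_neg h, dif_pos h']; simp; omega
      · simp only [dif_neg h, dif_neg h']; simp; omega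

lemma split3 {f : ℕ × ℕ → ℝ} (hf : Summable f) :
    ∑' p, f p = (∑' p : ℕ × ℕ, f (p.1 + p.2 + 1, p.1)) +
      (∑' p : ℕ × ℕ, f (p.1, p.1 + p.2 + 1)) + ∑' k : ℕ, f (k, k) := by
  have hE : Summable (f ∘ E) := (E.summable_iff).mpr hf
  have hE' : Summable (fun c => f (E c)) := hE
  have hE2 : Summable (fun a : (ℕ × ℕ) ⊕ (ℕ × ℕ) => f (E (Sum.inl a))) :=
    hE'.comp_injective Sum.inl_injective
  rw [← E.tsum_eq f, tsum_sum_type hE', tsum_sum_type hE2]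
  rfl

lemma tsum_swap' (a b : ℕ) : ∑' p : ℕ × ℕ, tf a b (p.2, p.1) = t a b := by
  rw [t]
  exact (Equiv.prodComm ℕ ℕ).tsum_eq (tf a b)

lemma summable_swap {a b : ℕ} (h : Summable (tf a b)) :
    Summable (fun p : ℕ × ℕ => tf a b (p.2, p.1)) :=
  ((Equiv.prodComm ℕ ℕ).summable_iff).mpr h

lemma stuffle {a b : ℕ} (ha : 2 ≤ a) (hb : 2 ≤ b) :
    z a * z b = t a b + t b a + z (a + b) := by
  rw [z, z, Summable.tsum_mul_tsum (summable_zf ha) (summable_zf hb) (summable_pf ha hb),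
    split3 (summable_pf ha hb)]
  congr 1
  · congr 1
    · rw [t]
      apply tsum_congr
      intro p
      unfold zf tf
      push_cast
      ring
    · rw [t]
      apply tsum_congr
      intro p
      unfold zf tf
      push_cast
      ring
  · rw [z]
    apply tsum_congr
    intro k
    unfold zf
    rw [pow_add, one_div_mul_one_div]


/-! ### pointwise partial fraction identities -/

set_option maxHeartbeats 1000000 in
private lemma key22 (x y : ℝ) (hx : x ≠ 0) (hy : y ≠ 0) (hs : x + y ≠ 0) :
    1 / x ^ 2 * (1 / y ^ 2) =
      2 * (1 / ((x+y) ^ 3 * x ^ 1)) + 1 / ((x+y) ^ 2 * x ^ 2) +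
      (2 * (1 / ((x+y) ^ 3 * y ^ 1)) + 1 / ((x+y) ^ 2 * y ^ 2)) := by
  field_simp
  ring

set_option maxHeartbeats 1000000 in
private lemma key25 (x y : ℝ) (hx : x ≠ 0) (hy : y ≠ 0) (hs : x + y ≠ 0) :
    1 / x ^ 2 * (1 / y ^ 5) =
      5 * (1 / ((x+y) ^ 6 * x ^ 1)) + 1 / ((x+y) ^ 5 * x ^ 2) +
      (5 * (1 / ((x+y) ^ 6 * y ^ 1)) + 4 * (1 / ((x+y) ^ 5 * y ^ 2)) +
        3 * (1 / ((x+y) ^ 4 * y ^ 3)) + 2 * (1 / ((x+y) ^ 3 * y ^ 4)) +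
        1 / ((x+y) ^ 2 * y ^ 5)) := by
  field_simp
  ring

set_option maxHeartbeats 1000000 in
private lemma key34 (x y : ℝ) (hx : x ≠ 0) (hy : y ≠ 0) (hs : x + y ≠ 0) :
    1 / x ^ 3 * (1 / y ^ 4) =
      10 * (1 / ((x+y) ^ 6 * x ^ 1)) + 4 * (1 / ((x+y) ^ 5 * x ^ 2)) + 1 / ((x+y) ^ 4 * x ^ 3) +
      (10 * (1 / ((x+y) ^ 6 * y ^ 1)) + 6 * (1 / ((x+y) ^ 5 * y ^ 2)) +
        3 * (1 / ((x+y) ^ 4 * y ^ 3)) + 1 / ((x+y) ^ 3 * y ^ 4)) := by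
  field_simp
  ring

set_option maxHeartbeats 1000000 in
private lemma keyD (c : ℕ) (x y : ℝ) (hx : x ≠ 0) (hy : y ≠ 0) (hs : x + y ≠ 0) :
    1 / (x * y * (x+y) ^ c) =
      1 / ((x+y) ^ (c+1) * x ^ 1) + 1 / ((x+y) ^ (c+1) * y ^ 1) := by
  have hsc : (x+y) ^ c ≠ 0 := pow_ne_zero _ hs
  rw [pow_succ]
  field_simp
  ring

set_option maxHeartbeats 1000000 in
private lemma keyS2 (x y : ℝ) (hx : x ≠ 0) (hy : y ≠ 0) (hs : x + y ≠ 0) :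
    1 / (x * y * (x+y) ^ 2) + 1 / ((x+y) ^ 2 * x ^ 2) =
      1 / (x ^ 2 * (y * (x+y))) := by
  field_simp

set_option maxHeartbeats 1000000 in
private lemma keyS5 (x y : ℝ) (hx : x ≠ 0) (hy : y ≠ 0) (hs : x + y ≠ 0) :
    1 / (x * y * (x+y) ^ 5) +
      (1 / ((x+y) ^ 2 * x ^ 5) + 1 / ((x+y) ^ 3 * x ^ 4) + 1 / ((x+y) ^ 4 * x ^ 3) +
        1 / ((x+y) ^ 5 * x ^ 2)) =
      1 / (x ^ 5 * (y * (x+y))) := by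
  field_simp
  ring

set_option maxHeartbeats 1000000 in
private lemma keyR (c : ℕ) (x y : ℝ) (hx : x ≠ 0) (hy : y ≠ 0) (hs : x + y ≠ 0) :
    1 / (x ^ c * (y * (x+y))) = 1 / x ^ (c+1) * (1 / y - 1 / (x + y)) := by
  have hxc : x ^ c ≠ 0 := pow_ne_zero _ hx
  rw [pow_succ]
  field_simp
  ring

/-! ### pointwise identities in terms of `tf` etc. -/

lemma decomp22_pt (p : ℕ × ℕ) :
    zf 2 p.1 * zf 2 p.2 =
      2 * tf 3 1 p + tf 2 2 p + (2 * tf 3 1 (p.2, p.1) + tf 2 2 (p.2, p.1)) := by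
  obtain ⟨j, k⟩ := p
  unfold zf tf
  dsimp only
  have e1 : (j:ℝ)+(k:ℝ)+2 = ((j:ℝ)+1)+((k:ℝ)+1) := by ring
  have e2 : (k:ℝ)+(j:ℝ)+2 = ((j:ℝ)+1)+((k:ℝ)+1) := by ring
  rw [e1, e2]
  exact key22 _ _ (by positivity) (by positivity) (by positivity)

lemma decomp25_pt (p : ℕ × ℕ) :
    zf 2 p.1 * zf 5 p.2 =
      5 * tf 6 1 p + tf 5 2 p +
      (5 * tf 6 1 (p.2, p.1) + 4 * tf 5 2 (p.2, p.1) + 3 * tf 4 3 (p.2, p.1) +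
        2 * tf 3 4 (p.2, p.1) + tf 2 5 (p.2, p.1)) := by
  obtain ⟨j, k⟩ := p
  unfold zf tf
  dsimp only
  have e1 : (j:ℝ)+(k:ℝ)+2 = ((j:ℝ)+1)+((k:ℝ)+1) := by ring
  have e2 : (k:ℝ)+(j:ℝ)+2 = ((j:ℝ)+1)+((k:ℝ)+1) := by ring
  rw [e1, e2]
  exact key25 _ _ (by positivity) (by positivity) (by positivity)

lemma decomp34_pt (p : ℕ × ℕ) :
    zf 3 p.1 * zf 4 p.2 =
      10 * tf 6 1 p + 4 * tf 5 2 p + tf 4 3 p +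
      (10 * tf 6 1 (p.2, p.1) + 6 * tf 5 2 (p.2, p.1) + 3 * tf 4 3 (p.2, p.1) +
        tf 3 4 (p.2, p.1)) := by
  obtain ⟨j, k⟩ := p
  unfold zf tf
  dsimp only
  have e1 : (j:ℝ)+(k:ℝ)+2 = ((j:ℝ)+1)+((k:ℝ)+1) := by ring
  have e2 : (k:ℝ)+(j:ℝ)+2 = ((j:ℝ)+1)+((k:ℝ)+1) := by ring
  rw [e1, e2]
  exact key34 _ _ (by positivity) (by positivity) (by positivity)

lemma keyD_pt (c : ℕ) (p : ℕ × ℕ) :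
    df c p = tf (c+1) 1 p + tf (c+1) 1 (p.2, p.1) := by
  obtain ⟨j, k⟩ := p
  unfold df tf
  dsimp only
  have e1 : (j:ℝ)+(k:ℝ)+2 = ((j:ℝ)+1)+((k:ℝ)+1) := by ring
  have e2 : (k:ℝ)+(j:ℝ)+2 = ((j:ℝ)+1)+((k:ℝ)+1) := by ring
  rw [e1, e2]
  exact keyD c _ _ (by positivity) (by positivity) (by positivity)

lemma keyS2_pt (p : ℕ × ℕ) : df 2 p + tf 2 2 p = rf 2 p := by
  obtain ⟨j, k⟩ := p
  unfold df tf rf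
  dsimp only
  have e1 : (j:ℝ)+(k:ℝ)+2 = ((j:ℝ)+1)+((k:ℝ)+1) := by ring
  rw [e1]
  exact keyS2 _ _ (by positivity) (by positivity) (by positivity)

lemma keyS5_pt (p : ℕ × ℕ) :
    df 5 p + (tf 2 5 p + tf 3 4 p + tf 4 3 p + tf 5 2 p) = rf 5 p := by
  obtain ⟨j, k⟩ := p
  unfold df tf rf
  dsimp only
  have e1 : (j:ℝ)+(k:ℝ)+2 = ((j:ℝ)+1)+((k:ℝ)+1) := by ring
  rw [e1]
  exact keyS5 _ _ (by positivity) (by positivity) (by positivity)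

lemma keyR_pt (c : ℕ) (p : ℕ × ℕ) :
    rf c p = 1 / ((p.1:ℝ)+1) ^ (c+1) * (1 / ((p.2:ℝ)+1) - 1 / (((p.1:ℝ)+1) + ((p.2:ℝ)+1))) := by
  obtain ⟨j, k⟩ := p
  unfold rf
  dsimp only
  have e1 : (j:ℝ)+(k:ℝ)+2 = ((j:ℝ)+1)+((k:ℝ)+1) := by ring
  rw [e1]
  exact keyR c _ _ (by positivity) (by positivity) (by positivity)


/-! ### summed decomposition identities -/

lemma hs_t (a b : ℕ) (h : Summable (tf a b)) : HasSum (tf a b) (t a b) := h.hasSum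

lemma hs_swap (a b : ℕ) (h : Summable (tf a b)) :
    HasSum (fun p : ℕ × ℕ => tf a b (p.2, p.1)) (t a b) := by
  have := ((Equiv.prodComm ℕ ℕ).hasSum_iff).mpr (hs_t a b h)
  exact this

lemma decompS22 : z 2 * z 2 = 2 * t 3 1 + t 2 2 + (2 * t 3 1 + t 2 2) := by
  have h31 := hs_t 3 1 (summable_tf1 (by norm_num))
  have h31s := hs_swap 3 1 (summable_tf1 (by norm_num))
  have h22 := hs_t 2 2 (summable_tf2 le_rfl le_rfl)
  have h22s := hs_swap 2 2 (summable_tf2 le_rfl le_rfl)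
  rw [z, Summable.tsum_mul_tsum (summable_zf le_rfl) (summable_zf le_rfl) (summable_pf le_rfl le_rfl)]
  rw [tsum_congr decomp22_pt]
  exact (((h31.mul_left 2).add h22).add ((h31s.mul_left 2).add h22s)).tsum_eq

lemma decompS25 : z 2 * z 5 =
    5 * t 6 1 + t 5 2 + (5 * t 6 1 + 4 * t 5 2 + 3 * t 4 3 + 2 * t 3 4 + t 2 5) := by
  have h61 := hs_t 6 1 (summable_tf1 (by norm_num))
  have h61s := hs_swap 6 1 (summable_tf1 (by norm_num))
  have h52 := hs_t 5 2 (summable_tf2 (by norm_num) le_rfl)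
  have h52s := hs_swap 5 2 (summable_tf2 (by norm_num) le_rfl)
  have h43s := hs_swap 4 3 (summable_tf2 (by norm_num) (by norm_num))
  have h34s := hs_swap 3 4 (summable_tf2 (by norm_num) (by norm_num))
  have h25s := hs_swap 2 5 (summable_tf2 (by norm_num) (by norm_num))
  rw [z, z, Summable.tsum_mul_tsum (summable_zf le_rfl) (summable_zf (by norm_num))
    (summable_pf le_rfl (by norm_num))]
  rw [tsum_congr decomp25_pt]
  exact (((h61.mul_left 5).add h52).add
    (((((h61s.mul_left 5).add (h52s.mul_left 4)).add (h43s.mul_left 3)).add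
      (h34s.mul_left 2)).add h25s)).tsum_eq

lemma decompS34 : z 3 * z 4 =
    10 * t 6 1 + 4 * t 5 2 + t 4 3 +
      (10 * t 6 1 + 6 * t 5 2 + 3 * t 4 3 + t 3 4) := by
  have h61 := hs_t 6 1 (summable_tf1 (by norm_num))
  have h61s := hs_swap 6 1 (summable_tf1 (by norm_num))
  have h52 := hs_t 5 2 (summable_tf2 (by norm_num) le_rfl)
  have h52s := hs_swap 5 2 (summable_tf2 (by norm_num) le_rfl)
  have h43 := hs_t 4 3 (summable_tf2 (by norm_num) (by norm_num))
  have h43s := hs_swap 4 3 (summable_tf2 (by norm_num) (by norm_num))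
  have h34s := hs_swap 3 4 (summable_tf2 (by norm_num) (by norm_num))
  rw [z, z, Summable.tsum_mul_tsum (summable_zf (by norm_num)) (summable_zf (by norm_num))
    (summable_pf (by norm_num) (by norm_num))]
  rw [tsum_congr decomp34_pt]
  exact ((((h61.mul_left 10).add (h52.mul_left 4)).add h43).add
    ((((h61s.mul_left 10).add (h52s.mul_left 6)).add (h43s.mul_left 3)).add h34s)).tsum_eq

/-! ### the `D` sums -/

lemma D_eq {c : ℕ} (hc : 2 ≤ c) : ∑' p : ℕ × ℕ, df c p = t (c+1) 1 + t (c+1) 1 := by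
  have h1 := hs_t (c+1) 1 (summable_tf1 (by omega))
  have h2 := hs_swap (c+1) 1 (summable_tf1 (by omega))
  rw [tsum_congr (keyD_pt c)]
  exact (h1.add h2).tsum_eq


/-! ### telescoping -/

lemma tele (m : ℕ) :
    HasSum (fun n : ℕ => 1 / ((n:ℝ) + 1) - 1 / ((n:ℝ) + (m:ℝ) + 2))
      (∑ i ∈ range (m+1), 1 / ((i:ℝ) + 1)) := by
  have hm : (0:ℝ) ≤ (m:ℝ) := Nat.cast_nonneg m
  have hnn : ∀ n : ℕ, 0 ≤ 1 / ((n:ℝ) + 1) - 1 / ((n:ℝ) + (m:ℝ) + 2) := by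
    intro n
    have h0 : (0:ℝ) < (n:ℝ) + 1 := by positivity
    have h2 : ((n:ℝ) + 1) ≤ (n:ℝ) + (m:ℝ) + 2 := by linarith
    have := one_div_le_one_div_of_le h0 h2
    linarith
  rw [hasSum_iff_tendsto_nat_of_nonneg hnn]
  have key : ∀ N : ℕ, ∑ n ∈ range N, (1 / ((n:ℝ) + 1) - 1 / ((n:ℝ) + (m:ℝ) + 2))
      = ∑ i ∈ range (m+1), 1 / ((i:ℝ) + 1) - ∑ i ∈ range (m+1), 1 / ((N:ℝ) + (i:ℝ) + 1) := by
    intro N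
    set f : ℕ → ℝ := fun n => 1 / ((n:ℝ) + 1) with hf
    have e0 : ∀ n : ℕ, 1 / ((n:ℝ) + (m:ℝ) + 2) = f (n + (m+1)) := by
      intro n; rw [hf]; push_cast; ring_nf
    have e1 : ∑ n ∈ range ((m+1) + N), f n
        = ∑ n ∈ range (m+1), f n + ∑ n ∈ range N, f ((m+1) + n) :=
      Finset.sum_range_add f (m+1) N
    have e2 : ∑ n ∈ range (N + (m+1)), f n
        = ∑ n ∈ range N, f n + ∑ n ∈ range (m+1), f (N + n) :=
      Finset.sum_range_add f N (m+1)
    have e3 : (m+1) + N = N + (m+1) := by omega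
    rw [Finset.sum_sub_distrib]
    have e4 : ∑ n ∈ range N, 1 / ((n:ℝ) + (m:ℝ) + 2) = ∑ n ∈ range N, f ((m+1) + n) := by
      apply Finset.sum_congr rfl
      intro n _
      rw [e0 n, Nat.add_comm]
    have e5 : ∀ n, f (N + n) = 1 / ((N:ℝ) + (n:ℝ) + 1) := by
      intro n; rw [hf]; push_cast; ring_nf
    rw [e4]
    rw [e3] at e1
    rw [e1] at e2
    have : ∑ n ∈ range (m+1), f (N + n) = ∑ i ∈ range (m+1), 1 / ((N:ℝ) + (i:ℝ) + 1) :=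
      Finset.sum_congr rfl fun n _ => e5 n
    rw [← this]
    linarith [e2]
  simp only [key]
  have htail : Filter.Tendsto (fun N : ℕ => ∑ i ∈ range (m+1), 1 / ((N:ℝ) + (i:ℝ) + 1))
      Filter.atTop (nhds 0) := by
    have : ∀ i : ℕ, Filter.Tendsto (fun N : ℕ => 1 / ((N:ℝ) + (i:ℝ) + 1))
        Filter.atTop (nhds 0) := by
      intro i
      apply squeeze_zero (fun N => by positivity) (g := fun N : ℕ => 1 / ((N:ℝ) + 1))
      · intro N
        apply one_div_le_one_div_of_le (by positivity)
        have : (0:ℝ) ≤ (i:ℝ) := Nat.cast_nonneg i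
        linarith
      · exact tendsto_one_div_add_atTop_nhds_zero_nat
    have h0 := tendsto_finset_sum (range (m+1)) (fun i _ => this i)
    simpa using h0
  have := (tendsto_const_nhds (x := ∑ i ∈ range (m+1), 1 / ((i:ℝ) + 1))
    (f := Filter.atTop (α := ℕ))).sub htail
  simpa using this

/-! ### triangle reindexing -/

def Tri : (Σ q : ℕ, Fin (q+1)) ≃ ℕ × ℕ where
  toFun x := ((x.2 : ℕ), x.1 - (x.2 : ℕ))
  invFun p := ⟨p.1 + p.2, ⟨p.1, by omega⟩⟩
  left_inv x := by
    rcases x with ⟨q, i⟩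
    have hi : (i : ℕ) < q + 1 := i.isLt
    refine Sigma.ext (by simp; omega) ?_
    rw [Fin.heq_ext_iff (by simp; omega)]
  right_inv p := by
    rcases p with ⟨a, b⟩
    simp

/-- the row sums of `t (c+1) 1`. -/
def G1 (c : ℕ) (j : ℕ) : ℝ := 1 / ((j:ℝ) + 1) ^ (c+1) * ∑ i ∈ range j, 1 / ((i:ℝ) + 1)

lemma G1_nonneg (c j : ℕ) : 0 ≤ G1 c j := by
  unfold G1
  have : (0:ℝ) ≤ ∑ i ∈ range j, 1 / ((i:ℝ) + 1) :=
    Finset.sum_nonneg fun i _ => by positivity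
  positivity

lemma summable_G1 {c : ℕ} (hc : 2 ≤ c) : Summable (G1 c) := by
  refine Summable.of_nonneg_of_le (G1_nonneg c) (fun j => ?_) (summable_zf hc)
  unfold G1 zf
  have hb : ∑ i ∈ range j, 1 / ((i:ℝ) + 1) ≤ (j:ℝ) := by
    calc ∑ i ∈ range j, 1 / ((i:ℝ) + 1) ≤ ∑ i ∈ range j, (1:ℝ) := by
          apply Finset.sum_le_sum
          intro i _
          rw [div_le_one (by positivity)]
          linarith [Nat.cast_nonneg (α := ℝ) i]
      _ = (j:ℝ) := by simp
  have h0 : (0:ℝ) < ((j:ℝ) + 1) ^ (c+1) := by positivity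
  calc 1 / ((j:ℝ) + 1) ^ (c+1) * ∑ i ∈ range j, 1 / ((i:ℝ) + 1)
      ≤ 1 / ((j:ℝ) + 1) ^ (c+1) * ((j:ℝ) + 1) := by
        apply mul_le_mul_of_nonneg_left ?_ (by positivity)
        linarith [Nat.cast_nonneg (α := ℝ) j]
    _ = 1 / ((j:ℝ) + 1) ^ c := by
        rw [pow_succ]
        field_simp

lemma tsum_G1 {c : ℕ} (hc : 2 ≤ c) : ∑' j, G1 c j = t (c+1) 1 := by
  have htf : Summable (tf (c+1) 1) := summable_tf1 (by omega)
  have h2 : HasSum (fun x : (Σ q : ℕ, Fin (q+1)) => tf (c+1) 1 (Tri x)) (t (c+1) 1) :=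
    (Tri.hasSum_iff).mpr (hs_t (c+1) 1 htf)
  have h3 : ∀ q : ℕ, HasSum (fun i : Fin (q+1) => tf (c+1) 1 (Tri ⟨q, i⟩))
      (∑ i : Fin (q+1), tf (c+1) 1 (Tri ⟨q, i⟩)) := fun q => hasSum_fintype _
  have h4 : HasSum (fun q : ℕ => ∑ i : Fin (q+1), tf (c+1) 1 (Tri ⟨q, i⟩)) (t (c+1) 1) :=
    h2.sigma h3
  have h5 : ∀ q : ℕ, ∑ i : Fin (q+1), tf (c+1) 1 (Tri ⟨q, i⟩) = G1 c (q+1) := by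
    intro q
    simp only [Tri, Equiv.coe_fn_mk]
    rw [Fin.sum_univ_eq_sum_range (fun n => tf (c+1) 1 (n, q - n)) (q+1)]
    unfold G1
    rw [Finset.mul_sum]
    apply Finset.sum_congr rfl
    intro i hi
    have hi' : i ≤ q := by
      have := Finset.mem_range.mp hi
      omega
    unfold tf
    dsimp only
    rw [Nat.cast_sub hi']
    push_cast
    rw [pow_one, one_div_mul_one_div]
    ring_nf
  rw [Summable.tsum_eq_zero_add (summable_G1 hc)]
  have hG0 : G1 c 0 = 0 := by
    unfold G1
    simp
  rw [hG0, zero_add, tsum_congr (fun q => (h5 q).symm)]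
  exact h4.tsum_eq

lemma R_eq {c : ℕ} (hc : 2 ≤ c) : ∑' p : ℕ × ℕ, rf c p = t (c+1) 1 + z (c+2) := by
  have hrf := summable_rf hc
  rw [Summable.tsum_prod' hrf (fun b => hrf.prod_factor b)]
  have hrow : ∀ j : ℕ, ∑' k, rf c (j, k) = G1 c j + zf (c+2) j := by
    intro j
    have e : (fun k : ℕ => rf c (j, k)) =
        (fun n : ℕ => 1 / ((j:ℝ)+1) ^ (c+1) * (1 / ((n:ℝ) + 1) - 1 / ((n:ℝ) + (j:ℝ) + 2))) := by
      funext k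
      rw [keyR_pt c (j, k)]
      dsimp only
      ring_nf
    have h1 : HasSum (fun k : ℕ => rf c (j, k))
        (1 / ((j:ℝ)+1) ^ (c+1) * ∑ i ∈ range (j+1), 1 / ((i:ℝ) + 1)) := by
      rw [e]
      exact (tele j).mul_left _
    rw [h1.tsum_eq]
    unfold G1 zf
    rw [Finset.sum_range_succ, mul_add]
    congr 1
    rw [pow_succ, one_div_mul_one_div, pow_add]
    ring_nf
  rw [tsum_congr hrow, Summable.tsum_add (summable_G1 hc) (summable_zf (by omega)), tsum_G1 hc]
  rfl

lemma sum4 : t 3 1 + t 2 2 = z 4 := by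
  have h1 : ∑' p : ℕ × ℕ, (df 2 p + tf 2 2 p) = ∑' p : ℕ × ℕ, rf 2 p := tsum_congr keyS2_pt
  rw [Summable.tsum_add (summable_df le_rfl) (summable_tf2 le_rfl le_rfl), D_eq le_rfl,
    R_eq le_rfl, ← t] at h1
  linarith

lemma sum7 : t 6 1 + (t 2 5 + t 3 4 + t 4 3 + t 5 2) = z 7 := by
  have s25 := summable_tf2 (a := 2) (b := 5) (by norm_num) (by norm_num)
  have s34 := summable_tf2 (a := 3) (b := 4) (by norm_num) (by norm_num)
  have s43 := summable_tf2 (a := 4) (b := 3) (by norm_num) (by norm_num)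
  have s52 := summable_tf2 (a := 5) (b := 2) (by norm_num) (by norm_num)
  have hmid : HasSum (fun p : ℕ × ℕ => tf 2 5 p + tf 3 4 p + tf 4 3 p + tf 5 2 p)
      (t 2 5 + t 3 4 + t 4 3 + t 5 2) :=
    (((hs_t 2 5 s25).add (hs_t 3 4 s34)).add (hs_t 4 3 s43)).add (hs_t 5 2 s52)
  have h1 : ∑' p : ℕ × ℕ, (df 5 p + (tf 2 5 p + tf 3 4 p + tf 4 3 p + tf 5 2 p))
      = ∑' p : ℕ × ℕ, rf 5 p := tsum_congr keyS5_pt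
  rw [Summable.tsum_add (summable_df (by norm_num)) hmid.summable, hmid.tsum_eq,
    D_eq (by norm_num), R_eq (by norm_num)] at h1
  linarith

/-! ### reindexing the double zeta value -/

def E2 : ℕ × ℕ ≃ {p : ℕ × ℕ // 0 < p.1 ∧ p.1 < p.2} where
  toFun p := ⟨(p.1 + 1, p.1 + p.2 + 2), by constructor <;> simp <;> omega⟩
  invFun q := (q.1.1 - 1, q.1.2 - q.1.1 - 1)
  left_inv p := by
    obtain ⟨a, b⟩ := p
    simp [Prod.ext_iff]
    omega
  right_inv q := by
    obtain ⟨⟨a, b⟩, h1, h2⟩ := q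
    apply Subtype.ext
    simp [Prod.ext_iff]
    omega

lemma target_eq : (∑' p : {p : ℕ × ℕ // 0 < p.1 ∧ p.1 < p.2},
    1 / ((p.1.1 : ℝ) ^ 4 * (p.1.2 : ℝ) ^ 3)) = t 3 4 := by
  rw [t, ← E2.tsum_eq (fun p : {p : ℕ × ℕ // 0 < p.1 ∧ p.1 < p.2} =>
    1 / ((p.1.1 : ℝ) ^ 4 * (p.1.2 : ℝ) ^ 3))]
  apply tsum_congr
  intro p
  simp only [E2, Equiv.coe_fn_mk]
  unfold tf
  push_cast
  ring_nf

lemma z_eq (s : ℕ) : (∑' k : ℕ, 1 / ((k : ℝ) + 1) ^ s) = z s := rfl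

lemma main_identity : t 3 4 = -18 * z 7 + 10 * z 5 * z 2 + 2 / 5 * z 3 * z 2 ^ 2 := by
  have s22 := stuffle (a := 2) (b := 2) le_rfl le_rfl
  have s25 := stuffle (a := 2) (b := 5) le_rfl (by norm_num)
  have s34 := stuffle (a := 3) (b := 4) (by norm_num) (by norm_num)
  norm_num at s22 s25 s34
  have d22 := decompS22
  have d25 := decompS25
  have d34 := decompS34
  have h4 := sum4
  have h7 := sum7
  have hz4 : z 4 = 2 / 5 * (z 2 * z 2) := by linarith
  have ht34 : t 3 4 = -18 * z 7 + 10 * (z 2 * z 5) + z 3 * z 4 := by linarith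
  have hB : z 3 * z 4 = 2 / 5 * z 3 * z 2 ^ 2 := by rw [hz4]; ring
  have hA : z 2 * z 5 = z 5 * z 2 := mul_comm _ _
  linarith

end

end ZetaFT

/-- The identity `ζ(4,3) = -18 ζ(7) + 10 ζ(5) ζ(2) + (2/5) ζ(3) ζ(2)²`. -/
theorem zeta_four_three :
    (∑' p : {p : ℕ × ℕ // 0 < p.1 ∧ p.1 < p.2}, 1 / ((p.1.1 : ℝ) ^ 4 * (p.1.2 : ℝ) ^ 3)) =
      -18 * (∑' k : ℕ, 1 / ((k : ℝ) + 1) ^ 7) +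
        10 * (∑' k : ℕ, 1 / ((k : ℝ) + 1) ^ 5) * (∑' k : ℕ, 1 / ((k : ℝ) + 1) ^ 2) +
        (2 / 5) * (∑' k : ℕ, 1 / ((k : ℝ) + 1) ^ 3) * (∑' k : ℕ, 1 / ((k : ℝ) + 1) ^ 2) ^ 2 := by
  rw [ZetaFT.z_eq 7, ZetaFT.z_eq 5, ZetaFT.z_eq 2, ZetaFT.z_eq 3, ZetaFT.target_eq]
  have := ZetaFT.main_identity
  linarith
end
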